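/- arXiv:2206.10992 — 12 statements merged into one kernel-verified Lean document; each statement's English description precedes it below -/
import Mathlib

section
/- Let (X, d) be a locally compact metric space that is a Baire space, and let G be a group acting on X by homeomorphisms. If (1) there exists a point whose orbit under G is dense in X but not closed, and (2) the union of the minimal sets of G is a dense proper subset of X, then G is sensitive to initial conditions on (X, d). Moreover, G is sensitive with respect to every metric ρ on X that induces the same topology as d. -/
open Pointwise

/-- The diameter (in `ℝ≥0∞`) of a set `S` with respect to a distance function `d`. -/
noncomputable def ediamD {X : Type*} (d : X → X → ℝ) (S : Set X) : ENNReal :=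
  ⨆ (y : S) (z : S), ENNReal.ofReal (d y.1 z.1)

/-- `G` is sensitive to initial conditions with respect to the distance function `d`:
there is `δ > 0` such that for every nonempty open set `U` there is `g ∈ G` with
`diam (g • U) ≥ δ`. -/
def SensitiveOn (G : Type*) {X : Type*} [Group G] [MulAction G X] [TopologicalSpace X]
    (d : X → X → ℝ) : Prop :=
  ∃ δ : ℝ, 0 < δ ∧ ∀ U : Set X, IsOpen U → U.Nonempty →
    ∃ g : G, ENNReal.ofReal δ ≤ ediamD d (g • U)

/-- A minimal set of `G`: a nonempty closed `G`-invariant set in which every orbit is dense. -/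
def IsMinimalSet (G : Type*) {X : Type*} [Group G] [MulAction G X] [TopologicalSpace X]
    (M : Set X) : Prop :=
  M.Nonempty ∧ IsClosed M ∧ (∀ g : G, g • M ⊆ M) ∧
    ∀ x ∈ M, M ⊆ closure (MulAction.orbit G x)

section SensitiveAux

open Filter

variable {G X : Type*} [Group G] [MulAction G X] [MetricSpace X]

/-- Balls of a compatible distance function are open. -/
lemma ballOpen_aux {ρ : X → X → ℝ}
    (htri : ∀ x y z, ρ x z ≤ ρ x y + ρ y z)
    (hopen : ∀ s : Set X, IsOpen s ↔ ∀ x ∈ s, ∃ ε > 0, ∀ y, ρ x y < ε → y ∈ s)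
    (w : X) (ε : ℝ) : IsOpen {y | ρ w y < ε} := by
  rw [hopen]
  intro y hy
  have hy' : ρ w y < ε := hy
  refine ⟨ε - ρ w y, by linarith, fun z hz => ?_⟩
  show ρ w z < ε
  have := htri w y z
  linarith

/-- Sublevel sets of a compatible distance function are closed in the product. -/
lemma closedRel_aux {ρ : X → X → ℝ}
    (hzero : ∀ x y, ρ x y = 0 ↔ x = y)
    (hsymm : ∀ x y, ρ x y = ρ y x)
    (htri : ∀ x y z, ρ x z ≤ ρ x y + ρ y z)
    (hopen : ∀ s : Set X, IsOpen s ↔ ∀ x ∈ s, ∃ ε > 0, ∀ y, ρ x y < ε → y ∈ s)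
    (η : ℝ) : IsClosed {p : X × X | ρ p.1 p.2 ≤ η} := by
  rw [← isOpen_compl_iff, isOpen_prod_iff]
  intro a b hab
  have hab' : η < ρ a b := not_le.mp hab
  refine ⟨{y | ρ a y < (ρ a b - η) / 2}, {y | ρ b y < (ρ a b - η) / 2},
    ballOpen_aux htri hopen a _, ballOpen_aux htri hopen b _, ?_, ?_, ?_⟩
  · show ρ a a < (ρ a b - η) / 2
    rw [(hzero a a).mpr rfl]; linarith
  · show ρ b b < (ρ a b - η) / 2
    rw [(hzero b b).mpr rfl]; linarith
  · rintro ⟨y, z⟩ ⟨hy, hz⟩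
    have hy' : ρ a y < (ρ a b - η) / 2 := hy
    have hz' : ρ b z < (ρ a b - η) / 2 := hz
    simp only [Set.mem_compl_iff, Set.mem_setOf_eq, not_le]
    have h1 : ρ a b ≤ ρ a y + ρ y b := htri a y b
    have h2 : ρ y b ≤ ρ y z + ρ z b := htri y z b
    have h3 : ρ z b = ρ b z := hsymm z b
    linarith

/-- Convergence with an explicit rate with respect to a compatible distance function. -/
lemma tendsto_of_rate_aux {ρ : X → X → ℝ}
    (hopen : ∀ s : Set X, IsOpen s ↔ ∀ x ∈ s, ∃ ε > 0, ∀ y, ρ x y < ε → y ∈ s)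
    {w : X} {a : ℕ → X} (h : ∀ k : ℕ, ρ w (a k) < 1 / ((k : ℝ) + 1)) :
    Tendsto a atTop (nhds w) := by
  rw [tendsto_atTop_nhds]
  intro U hwU hUopen
  obtain ⟨ε, hε, hb⟩ := (hopen U).mp hUopen w hwU
  obtain ⟨N, hN⟩ := exists_nat_one_div_lt hε
  refine ⟨N, fun n hn => hb _ ?_⟩
  have hNn : (N : ℝ) ≤ (n : ℝ) := Nat.cast_le.mpr hn
  have h1 : 1 / ((n : ℝ) + 1) ≤ 1 / ((N : ℝ) + 1) := by
    apply one_div_le_one_div_of_le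
    · positivity
    · linarith
  exact lt_of_lt_of_le (h n) (le_trans h1 (le_of_lt hN))

/-- Extraction of a uniform tracking point in a closed set, via compactness. -/
lemma extract_aux (hcont : ∀ g : G, Continuous fun x : X => g • x)
    {ρ : X → X → ℝ}
    (hzero : ∀ x y, ρ x y = 0 ↔ x = y)
    (hsymm : ∀ x y, ρ x y = ρ y x)
    (htri : ∀ x y z, ρ x z ≤ ρ x y + ρ y z)
    (hopen : ∀ s : Set X, IsOpen s ↔ ∀ x ∈ s, ∃ ε > 0, ∀ y, ρ x y < ε → y ∈ s)
    {w : X} {M K : Set X} (hM : IsClosed M) (hK : IsCompact K)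
    {η : ℝ} {a b : ℕ → X}
    (ha : Tendsto a atTop (nhds w))
    (hbK : ∀ k, b k ∈ K) (hbM : ∀ k, b k ∈ M)
    (hab : ∀ (k : ℕ) (g : G), ρ (g • a k) (g • b k) ≤ η) :
    ∃ y ∈ M, ∀ g : G, ρ (g • w) (g • y) ≤ η := by
  obtain ⟨y, hyK, φ, hφ, hlim⟩ := hK.isSeqCompact hbK
  have hlim' : Tendsto (fun k => b (φ k)) atTop (nhds y) := hlim
  have hyM : y ∈ M := hM.mem_of_tendsto hlim' (Eventually.of_forall fun k => hbM (φ k))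
  refine ⟨y, hyM, fun g => ?_⟩
  have h1 : Tendsto (fun k => a (φ k)) atTop (nhds w) := ha.comp hφ.tendsto_atTop
  have hpair : Tendsto (fun k => (g • a (φ k), g • b (φ k))) atTop
      (nhds (g • w, g • y)) :=
    (((hcont g).tendsto w).comp h1).prodMk_nhds (((hcont g).tendsto y).comp hlim')
  have hcl := closedRel_aux (X := X) hzero hsymm htri hopen η
  exact hcl.mem_of_tendsto hpair (Eventually.of_forall fun k => hab (φ k) g)

/-- The orbit closure of any point is invariant. -/
lemma orbitClosure_inv_aux (hcont : ∀ g : G, Continuous fun x : X => g • x)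
    (z : X) (g : G) :
    g • closure (MulAction.orbit G z) ⊆ closure (MulAction.orbit G z) := by
  have h1 : (fun y => g • y) '' closure (MulAction.orbit G z) ⊆
      closure ((fun y => g • y) '' MulAction.orbit G z) :=
    image_closure_subset_closure_image (hcont g)
  have h2 : (fun y => g • y) '' MulAction.orbit G z = MulAction.orbit G z := by
    rw [Set.image_smul, MulAction.smul_orbit]
  calc g • closure (MulAction.orbit G z)
      = (fun y => g • y) '' closure (MulAction.orbit G z) := (Set.image_smul).symm
    _ ⊆ closure ((fun y => g • y) '' MulAction.orbit G z) := h1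
    _ = closure (MulAction.orbit G z) := by rw [h2]

/-- The key auxiliary theorem: under the hypotheses of the main theorem, the action is
sensitive with respect to any metric inducing the topology. -/
theorem sensitive_aux [LocallyCompactSpace X]
    (hcont : ∀ g : G, Continuous fun x : X => g • x)
    {x : X} (hx : Dense (MulAction.orbit G x))
    (h2dense : Dense {x : X | ∃ M : Set X, IsMinimalSet G M ∧ x ∈ M})
    (h2proper : {x : X | ∃ M : Set X, IsMinimalSet G M ∧ x ∈ M} ≠ Set.univ)
    (ρ : X → X → ℝ)
    (hsymm : ∀ x y, ρ x y = ρ y x)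
    (hzero : ∀ x y, ρ x y = 0 ↔ x = y)
    (htri : ∀ x y z, ρ x z ≤ ρ x y + ρ y z)
    (hopen : ∀ s : Set X, IsOpen s ↔ ∀ x ∈ s, ∃ ε > 0, ∀ y, ρ x y < ε → y ∈ s) :
    SensitiveOn G ρ := by
  by_contra hsens
  unfold SensitiveOn at hsens
  push_neg at hsens
  -- hsens : ∀ δ, 0 < δ → ∃ U, IsOpen U ∧ U.Nonempty ∧ ∀ g, ediamD ρ (g • U) < ofReal δ
  have key1 : ∀ δ : ℝ, 0 < δ → ∃ U : Set X, IsOpen U ∧ U.Nonempty ∧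
      ∀ (g : G) (u v : X), u ∈ U → v ∈ U → ρ (g • u) (g • v) < δ := by
    intro δ hδ
    obtain ⟨U, hUo, hUne, hU⟩ := hsens δ hδ
    refine ⟨U, hUo, hUne, fun g u v hu hv => ?_⟩
    have hgu : g • u ∈ g • U := Set.smul_mem_smul_set hu
    have hgv : g • v ∈ g • U := Set.smul_mem_smul_set hv
    have h1 : ENNReal.ofReal (ρ (g • u) (g • v)) ≤ ediamD ρ (g • U) :=
      le_iSup_of_le ⟨g • u, hgu⟩ (le_iSup_of_le ⟨g • v, hgv⟩ le_rfl)
    exact (ENNReal.ofReal_lt_ofReal_iff hδ).mp (lt_of_le_of_lt h1 (hU g))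
  -- Claim 1 : every point is uniformly tracked by a point of some minimal set.
  have claim1 : ∀ (w : X) (ε : ℝ), 0 < ε → ∃ M : Set X, IsMinimalSet G M ∧
      ∃ y ∈ M, ∀ g : G, ρ (g • w) (g • y) ≤ ε := by
    intro w ε hε
    obtain ⟨K, hKc, hKn⟩ := exists_compact_mem_nhds w
    obtain ⟨O, hOK, hOo, hwO⟩ := mem_nhds_iff.mp hKn
    obtain ⟨ε₀, hε₀, hball⟩ := (hopen O).mp hOo w hwO
    have hδ : 0 < min ε ε₀ / 2 := by
      have := lt_min hε hε₀; linarith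
    obtain ⟨U, hUo, hUne, hU⟩ := key1 (min ε ε₀ / 2) hδ
    obtain ⟨u0, hu0orb, hu0U⟩ := hx.exists_mem_open hUo hUne
    have hu0dense : Dense (MulAction.orbit G u0) := by
      rw [MulAction.orbit_eq_iff.mpr hu0orb]; exact hx
    obtain ⟨p, hpS, hpU⟩ := h2dense.exists_mem_open hUo hUne
    obtain ⟨M, hM, hpM⟩ := hpS
    have hchoice : ∀ k : ℕ, ∃ g : G,
        ρ w (g • u0) < min (1 / ((k : ℝ) + 1)) (ε₀ / 2) := by
      intro k
      have hmin : 0 < min (1 / ((k : ℝ) + 1)) (ε₀ / 2) := by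
        apply lt_min
        · positivity
        · linarith
      have hBo := ballOpen_aux htri hopen w (min (1 / ((k : ℝ) + 1)) (ε₀ / 2))
      have hBne : Set.Nonempty {y | ρ w y < min (1 / ((k : ℝ) + 1)) (ε₀ / 2)} := by
        refine ⟨w, ?_⟩
        show ρ w w < _
        rw [(hzero w w).mpr rfl]; exact hmin
      obtain ⟨y, hyorb, hyB⟩ := hu0dense.exists_mem_open hBo hBne
      obtain ⟨g, rfl⟩ := hyorb
      exact ⟨g, hyB⟩
    choose gk hgk using hchoice
    have ha : Tendsto (fun k => gk k • u0) atTop (nhds w) :=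
      tendsto_of_rate_aux hopen
        (fun k => lt_of_lt_of_le (hgk k) (min_le_left _ _))
    have hbK : ∀ k, gk k • p ∈ K := by
      intro k
      apply hOK
      apply hball
      have h1 := htri w (gk k • u0) (gk k • p)
      have h2 : ρ (gk k • u0) (gk k • p) < min ε ε₀ / 2 := hU (gk k) u0 p hu0U hpU
      have h3 : ρ w (gk k • u0) < ε₀ / 2 := lt_of_lt_of_le (hgk k) (min_le_right _ _)
      have h4 : min ε ε₀ / 2 ≤ ε₀ / 2 := by
        have := min_le_right ε ε₀; linarith
      linarith
    have hbM : ∀ k, gk k • p ∈ M := fun k => hM.2.2.1 (gk k) (Set.smul_mem_smul_set hpM)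
    have hab : ∀ (k : ℕ) (g : G), ρ (g • gk k • u0) (g • gk k • p) ≤ ε := by
      intro k g
      rw [smul_smul, smul_smul]
      have h1 : ρ ((g * gk k) • u0) ((g * gk k) • p) < min ε ε₀ / 2 :=
        hU (g * gk k) u0 p hu0U hpU
      have h2 : min ε ε₀ / 2 ≤ ε := by
        have h3 := min_le_left ε ε₀; linarith
      linarith
    obtain ⟨y, hyM, hy⟩ := extract_aux hcont hzero hsymm htri hopen
      hM.2.1 hKc ha hbK hbM hab
    exact ⟨M, hM, y, hyM, hy⟩
  -- the bad point q not in any minimal set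
  obtain ⟨q, hq⟩ := (Set.ne_univ_iff_exists_notMem _).mp h2proper
  -- Claim 3 : the orbit of every point of the orbit closure of q comes back near q.
  have claim3 : ∀ z ∈ closure (MulAction.orbit G q), ∀ ε : ℝ, 0 < ε →
      ∃ h : G, ρ q (h • z) < ε := by
    intro z hz ε hε
    obtain ⟨K, hKc, hKn⟩ := exists_compact_mem_nhds z
    obtain ⟨O, hOK, hOo, hzO⟩ := mem_nhds_iff.mp hKn
    obtain ⟨ε₀, hε₀, hball⟩ := (hopen O).mp hOo z hzO
    have hη : 0 < min (ε / 3) (ε₀ / 4) := by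
      apply lt_min
      · linarith
      · linarith
    obtain ⟨M, hM, mt, hmtM, hqm⟩ := claim1 q (min (ε / 3) (ε₀ / 4)) hη
    have hchoice : ∀ k : ℕ, ∃ h : G,
        ρ z (h • q) < min (1 / ((k : ℝ) + 1)) (ε₀ / 2) := by
      intro k
      have hmin : 0 < min (1 / ((k : ℝ) + 1)) (ε₀ / 2) := by
        apply lt_min
        · positivity
        · linarith
      have hBo := ballOpen_aux htri hopen z (min (1 / ((k : ℝ) + 1)) (ε₀ / 2))
      have hzB : z ∈ {y | ρ z y < min (1 / ((k : ℝ) + 1)) (ε₀ / 2)} := by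
        show ρ z z < _
        rw [(hzero z z).mpr rfl]; exact hmin
      obtain ⟨y, hyB, hyorb⟩ := mem_closure_iff.mp hz _ hBo hzB
      obtain ⟨h, rfl⟩ := hyorb
      exact ⟨h, hyB⟩
    choose hk hhk using hchoice
    have ha : Tendsto (fun k => hk k • q) atTop (nhds z) :=
      tendsto_of_rate_aux hopen
        (fun k => lt_of_lt_of_le (hhk k) (min_le_left _ _))
    have hbK : ∀ k, hk k • mt ∈ K := by
      intro k
      apply hOK
      apply hball
      have h1 := htri z (hk k • q) (hk k • mt)
      have h2 : ρ (hk k • q) (hk k • mt) ≤ min (ε / 3) (ε₀ / 4) := hqm (hk k)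
      have h3 : ρ z (hk k • q) < ε₀ / 2 := lt_of_lt_of_le (hhk k) (min_le_right _ _)
      have h4 : min (ε / 3) (ε₀ / 4) ≤ ε₀ / 4 := min_le_right _ _
      linarith
    have hbM : ∀ k, hk k • mt ∈ M := fun k => hM.2.2.1 (hk k) (Set.smul_mem_smul_set hmtM)
    have hab : ∀ (k : ℕ) (g : G),
        ρ (g • hk k • q) (g • hk k • mt) ≤ min (ε / 3) (ε₀ / 4) := by
      intro k g
      rw [smul_smul, smul_smul]
      exact hqm (g * hk k)
    obtain ⟨zs, hzsM, hzz⟩ := extract_aux hcont hzero hsymm htri hopen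
      hM.2.1 hKc ha hbK hbM hab
    -- minimality of M : mt is in the closure of the orbit of zs
    have hmtcl : mt ∈ closure (MulAction.orbit G zs) := hM.2.2.2 zs hzsM hmtM
    have hBo2 := ballOpen_aux htri hopen mt (min (ε / 3) (ε₀ / 4))
    have hmtB : mt ∈ {y | ρ mt y < min (ε / 3) (ε₀ / 4)} := by
      show ρ mt mt < _
      rw [(hzero mt mt).mpr rfl]; exact hη
    obtain ⟨y', hy'B, hy'orb⟩ := mem_closure_iff.mp hmtcl _ hBo2 hmtB
    obtain ⟨h, rfl⟩ := hy'orb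
    refine ⟨h, ?_⟩
    have h1 : ρ q (h • z) ≤ ρ q mt + ρ mt (h • z) := htri _ _ _
    have h2 : ρ mt (h • z) ≤ ρ mt (h • zs) + ρ (h • zs) (h • z) := htri _ _ _
    have h3 : ρ q mt ≤ min (ε / 3) (ε₀ / 4) := by
      have := hqm 1
      rwa [one_smul, one_smul] at this
    have h4 : ρ mt (h • zs) < min (ε / 3) (ε₀ / 4) := hy'B
    have h5 : ρ (h • zs) (h • z) ≤ min (ε / 3) (ε₀ / 4) := by
      rw [hsymm]; exact hzz h
    have h6 : min (ε / 3) (ε₀ / 4) ≤ ε / 3 := min_le_left _ _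
    linarith
  -- Claim 4 : the orbit closure of q is a minimal set, contradiction.
  have hmin : IsMinimalSet G (closure (MulAction.orbit G q)) := by
    refine ⟨⟨q, subset_closure (MulAction.mem_orbit_self q)⟩, isClosed_closure,
      fun g => orbitClosure_inv_aux hcont q g, ?_⟩
    intro z hz
    have hqcl : q ∈ closure (MulAction.orbit G z) := by
      rw [mem_closure_iff]
      intro o hoo hqo
      obtain ⟨ε, hε, hball⟩ := (hopen o).mp hoo q hqo
      obtain ⟨h, hh⟩ := claim3 z hz ε hε
      exact ⟨h • z, hball _ hh, MulAction.mem_orbit z h⟩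
    apply closure_minimal _ isClosed_closure
    rintro y ⟨h, rfl⟩
    exact orbitClosure_inv_aux hcont z h (Set.smul_mem_smul_set hqcl)
  exact hq ⟨closure (MulAction.orbit G q), hmin,
    subset_closure (MulAction.mem_orbit_self q)⟩

end SensitiveAux

/-- Let `(X, d)` be a locally compact metric Baire space and `G` a group acting on `X` by
homeomorphisms. If `G` has a dense non-closed orbit and the union of the minimal sets of `G`
is a dense proper subset of `X`, then `G` is sensitive to initial conditions; moreover `G`
is sensitive with respect to every metric `ρ` inducing the same topology as `d`. -/
theorem sensitive_of_denseOrbit_denseMinimalSets {G X : Type*} [Group G] [MulAction G X]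
    [MetricSpace X] [LocallyCompactSpace X] [BaireSpace X]
    (hcont : ∀ g : G, Continuous fun x : X => g • x)
    (h1 : ∃ x : X, Dense (MulAction.orbit G x) ∧ ¬ IsClosed (MulAction.orbit G x))
    (h2dense : Dense {x : X | ∃ M : Set X, IsMinimalSet G M ∧ x ∈ M})
    (h2proper : {x : X | ∃ M : Set X, IsMinimalSet G M ∧ x ∈ M} ≠ Set.univ) :
    SensitiveOn G (dist : X → X → ℝ) ∧
    ∀ ρ : X → X → ℝ,
      (∀ x y, ρ x y = ρ y x) →
      (∀ x y, ρ x y = 0 ↔ x = y) →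
      (∀ x y z, ρ x z ≤ ρ x y + ρ y z) →
      (∀ s : Set X, IsOpen s ↔ ∀ x ∈ s, ∃ ε > 0, ∀ y, ρ x y < ε → y ∈ s) →
      SensitiveOn G ρ := by
  obtain ⟨x, hxdense, -⟩ := h1
  have hopen_dist : ∀ s : Set X, IsOpen s ↔
      ∀ x ∈ s, ∃ ε > 0, ∀ y, dist x y < ε → y ∈ s := by
    intro s
    rw [Metric.isOpen_iff]
    constructor
    · intro h x hx
      obtain ⟨ε, hε, hb⟩ := h x hx
      exact ⟨ε, hε, fun y hy => hb (by rwa [Metric.mem_ball, dist_comm])⟩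
    · intro h x hx
      obtain ⟨ε, hε, hb⟩ := h x hx
      refine ⟨ε, hε, fun y hy => hb y ?_⟩
      rw [Metric.mem_ball] at hy
      rwa [dist_comm]
  constructor
  · exact sensitive_aux hcont hxdense h2dense h2proper dist dist_comm
      (fun x y => dist_eq_zero) dist_triangle hopen_dist
  · intro ρ hs1 hs2 hs3 hs4
    exact sensitive_aux hcont hxdense h2dense h2proper ρ hs1 hs2 hs3 hs4
end

section
/- Let (X, d) be a locally compact metric space that is a Baire space. If a group G acting on X by homeomorphisms is chaotic on X, then G is sensitive to initial conditions on (X, d). -/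
open Pointwise

/-- `G` is chaotic on `X`: it has a dense non-closed orbit and the union of its
closed orbits is dense. -/
def Chaotic (G X : Type*) [Group G] [MulAction G X] [TopologicalSpace X] : Prop :=
  (∃ x : X, Dense (MulAction.orbit G x) ∧ ¬ IsClosed (MulAction.orbit G x)) ∧
  Dense (⋃ x ∈ {y : X | IsClosed (MulAction.orbit G y)}, MulAction.orbit G x)

/-- If a group `G` acts chaotically by homeomorphisms on a locally compact metric Baire
space `(X, d)`, then `G` is sensitive to initial conditions. -/
theorem sensitive_of_chaotic {G X : Type*} [Group G] [MulAction G X]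
    [MetricSpace X] [LocallyCompactSpace X] [BaireSpace X]
    (hcont : ∀ g : G, Continuous fun x : X => g • x)
    (hchaos : Chaotic G X) :
    SensitiveOn G (dist : X → X → ℝ) := by
  by_contra hsens
  obtain ⟨⟨x₀, hdense, hnotcl⟩, hcdense⟩ := hchaos
  -- a point with closed orbit
  have hXne : Nonempty X := ⟨x₀⟩
  obtain ⟨c₀, hc₀⟩ := hcdense.nonempty
  simp only [Set.mem_iUnion, Set.mem_setOf_eq] at hc₀
  obtain ⟨cstar, hcstarCl, -⟩ := hc₀
  -- a compact closed ball around `cstar`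
  obtain ⟨K, hKc, hKn⟩ := exists_compact_mem_nhds cstar
  obtain ⟨ρ, hρpos, hρsub⟩ := Metric.nhds_basis_closedBall.mem_iff.mp hKn
  have hballc : IsCompact (Metric.closedBall cstar ρ) :=
    hKc.of_isClosed_subset Metric.isClosed_closedBall hρsub
  -- main claim: x₀ belongs to the (closed) orbit of cstar
  have hx₀mem : x₀ ∈ MulAction.orbit G cstar := by
    rw [← hcstarCl.closure_eq, Metric.mem_closure_iff]
    intro ε' hε'
    set ε : ℝ := min (ε' / 3) (ρ / 4) with hεdef
    have hεpos : 0 < ε := lt_min (by linarith) (by linarith)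
    -- a "bad" open set U for this ε, coming from non-sensitivity
    obtain ⟨U, hUopen, hUne, hUsmall⟩ :
        ∃ U : Set X, IsOpen U ∧ U.Nonempty ∧
          ∀ g : G, ediamD (dist) (g • U) < ENNReal.ofReal ε := by
      by_contra h2
      push_neg at h2
      exact hsens ⟨ε, hεpos, fun U hUo hUn => h2 U hUo hUn⟩
    -- key smallness property of all translates of U
    have P : ∀ (h : G) (y z : X), y ∈ U → z ∈ U → dist (h • y) (h • z) < ε := by
      intro h y z hy hz
      have h1 : ENNReal.ofReal (dist (h • y) (h • z)) ≤ ediamD (dist) (h • U) := by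
        refine le_trans ?_ (le_iSup _ (⟨h • y, Set.smul_mem_smul_set hy⟩ : (h • U : Set X)))
        exact le_iSup (fun z' : (h • U : Set X) =>
          ENNReal.ofReal (dist (h • y) z'.1)) ⟨h • z, Set.smul_mem_smul_set hz⟩
      have h2 := lt_of_le_of_lt h1 (hUsmall h)
      exact (ENNReal.ofReal_lt_ofReal_iff hεpos).mp h2
    -- a point of U with closed orbit
    obtain ⟨c, hcS, hcU⟩ := hcdense.exists_mem_open hUopen hUne
    simp only [Set.mem_iUnion, Set.mem_setOf_eq] at hcS
    obtain ⟨y, hyCl, hcy⟩ := hcS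
    have hcCl : IsClosed (MulAction.orbit G c) := by
      rwa [MulAction.orbit_eq_iff.mpr hcy]
    -- a point of the dense orbit in U
    obtain ⟨b, hbO, hbU⟩ := hdense.exists_mem_open hUopen hUne
    obtain ⟨g₀, hg₀⟩ := MulAction.mem_orbit_iff.mp hbO
    rw [← hg₀] at hbU
    -- a sequence of orbit points approaching cstar
    have hsel : ∀ k : ℕ, ∃ u : G, dist (u • x₀) cstar < min ε (1 / (k + 1)) := by
      intro k
      have hpos : 0 < min ε (1 / (k + 1 : ℝ)) :=
        lt_min hεpos (by positivity)
      obtain ⟨b', hb'O, hb'⟩ := Metric.mem_closure_iff.mp (hdense cstar) _ hpos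
      obtain ⟨u, hu⟩ := MulAction.mem_orbit_iff.mp hb'O
      exact ⟨u, by rw [hu, dist_comm]; exact hb'⟩
    choose u hu using hsel
    set a : ℕ → X := fun k => u k • x₀ with ha
    set gk : ℕ → G := fun k => u k * g₀⁻¹ with hgk
    set p : ℕ → X := fun k => gk k • c with hp
    -- a k = gk k • (g₀ • x₀)
    have haeq : ∀ k, a k = gk k • (g₀ • x₀) := by
      intro k
      simp only [ha, hgk, smul_smul, inv_mul_cancel_right]
    -- all translated distances between a k and p k are < ε
    have hpa : ∀ (h : G) (k : ℕ), dist (h • a k) (h • p k) < ε := by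
      intro h k
      rw [haeq, hp]
      rw [smul_smul h (gk k) (g₀ • x₀), smul_smul h (gk k) c]
      exact P (h * gk k) _ _ hbU hcU
    -- p k stays in the compact ball
    have hpball : ∀ k, p k ∈ Metric.closedBall cstar ρ := by
      intro k
      have h1 : dist (p k) (a k) < ε := by
        have := hpa 1 k
        simpa [dist_comm] using this
      have h2 : dist (a k) cstar < ε := lt_of_lt_of_le (hu k) (min_le_left _ _)
      have h3 : dist (p k) cstar < ε + ε := lt_of_le_of_lt (dist_triangle _ (a k) _)
        (by linarith)
      have h4 : ε ≤ ρ / 4 := min_le_right _ _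
      exact Metric.mem_closedBall.mpr (by linarith)
    -- extract a convergent subsequence of p
    obtain ⟨w, hwball, φ, hφmono, hφconv⟩ := hballc.tendsto_subseq hpball
    -- w is in the (closed) orbit of c
    have hworb : w ∈ MulAction.orbit G c := by
      refine hcCl.mem_of_tendsto hφconv (Filter.Eventually.of_forall fun k => ?_)
      exact MulAction.mem_orbit c (gk (φ k))
    -- a ∘ φ tends to cstar
    have haconv : Filter.Tendsto (fun k => a (φ k)) Filter.atTop (nhds cstar) := by
      have hd : Filter.Tendsto (fun k => dist (a (φ k)) cstar) Filter.atTop (nhds 0) := by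
        apply squeeze_zero (fun k => dist_nonneg)
          (g := fun k => 1 / ((φ k : ℝ) + 1))
        · intro k
          exact le_of_lt (lt_of_lt_of_le (hu (φ k)) (min_le_right _ _))
        · have h1 : Filter.Tendsto (fun n : ℕ => 1 / ((n : ℝ) + 1))
              Filter.atTop (nhds 0) := tendsto_one_div_add_atTop_nhds_zero_nat
          exact h1.comp hφmono.tendsto_atTop
      exact tendsto_iff_dist_tendsto_zero.mpr hd
    obtain ⟨v, hv⟩ := MulAction.mem_orbit_iff.mp hworb
    -- the final estimates with k₁ = v * g₀
    set k₁ : G := v * g₀ with hk₁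
    have est1 : dist (k₁⁻¹ • cstar) (k₁⁻¹ • w) ≤ ε := by
      have hlim : Filter.Tendsto
          (fun j => dist (k₁⁻¹ • a (φ j)) (k₁⁻¹ • p (φ j))) Filter.atTop
          (nhds (dist (k₁⁻¹ • cstar) (k₁⁻¹ • w))) := by
        exact Filter.Tendsto.dist
          (((hcont k₁⁻¹).tendsto cstar).comp haconv)
          (((hcont k₁⁻¹).tendsto w).comp hφconv)
      exact le_of_tendsto hlim (Filter.Eventually.of_forall fun j => (hpa k₁⁻¹ (φ j)).le)
    have est2 : dist (k₁⁻¹ • w) x₀ < ε := by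
      have h1 : k₁⁻¹ • w = g₀⁻¹ • c := by
        rw [← hv, hk₁, smul_smul]
        congr 1
        group
      have h2 : x₀ = g₀⁻¹ • (g₀ • x₀) := by simp [smul_smul]
      rw [h1, h2]
      exact P g₀⁻¹ _ _ hcU hbU
    refine ⟨k₁⁻¹ • cstar, MulAction.mem_orbit cstar k₁⁻¹, ?_⟩
    have hεle : ε ≤ ε' / 3 := min_le_left _ _
    calc dist x₀ (k₁⁻¹ • cstar)
        ≤ dist x₀ (k₁⁻¹ • w) + dist (k₁⁻¹ • w) (k₁⁻¹ • cstar) := dist_triangle _ _ _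
      _ = dist (k₁⁻¹ • w) x₀ + dist (k₁⁻¹ • cstar) (k₁⁻¹ • w) := by rw [dist_comm, dist_comm (k₁⁻¹ • w) (k₁⁻¹ • cstar)]
      _ < ε + ε := add_lt_add_of_lt_of_le est2 est1
      _ < ε' := by linarith
  -- conclude: the orbit of x₀ equals the closed orbit of cstar
  have horbeq : MulAction.orbit G x₀ = MulAction.orbit G cstar :=
    MulAction.orbit_eq_iff.mpr hx₀mem
  exact hnotcl (horbeq ▸ hcstarCl)
end

section
/- Let (X, d) be a metric space that is a Baire space, and let G be a group acting on X by homeomorphisms having a dense non-closed orbit. Then G is pointwise sensitive (sensitive at every point of X) if and only if G is sensitive to initial conditions. -/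
open Pointwise

/-- `G` is sensitive at the point `x`: there is `δ > 0` such that for every open
neighborhood `U` of `x` there is `g ∈ G` with `diam (g • U) ≥ δ`. -/
def SensitiveAt (G : Type*) {X : Type*} [Group G] [MulAction G X] [TopologicalSpace X]
    (d : X → X → ℝ) (x : X) : Prop :=
  ∃ δ : ℝ, 0 < δ ∧ ∀ U : Set X, IsOpen U → x ∈ U →
    ∃ g : G, ENNReal.ofReal δ ≤ ediamD d (g • U)

/-- For a group `G` acting by homeomorphisms on a metric Baire space `(X, d)` and having a
dense non-closed orbit, `G` is pointwise sensitive if and only if `G` is sensitive to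
initial conditions. -/
theorem pointwiseSensitive_iff_sensitive {G X : Type*} [Group G] [MulAction G X]
    [MetricSpace X] [BaireSpace X]
    (hcont : ∀ g : G, Continuous fun x : X => g • x)
    (hdno : ∃ x : X, Dense (MulAction.orbit G x) ∧ ¬ IsClosed (MulAction.orbit G x)) :
    (∀ x : X, SensitiveAt G (dist : X → X → ℝ) x) ↔ SensitiveOn G (dist : X → X → ℝ) := by
  have csmul : ContinuousConstSMul G X := ⟨hcont⟩
  constructor
  · intro hpt
    obtain ⟨x₀, hdense, -⟩ := hdno
    have : Nonempty X := ⟨x₀⟩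
    set D : ℕ → Set X := fun n => {x | ∃ U : Set X, IsOpen U ∧ x ∈ U ∧
      ∀ g : G, ¬ ENNReal.ofReal ((n : ℝ) + 1)⁻¹ ≤ ediamD dist (g • U)} with hDdef
    have hopen : ∀ n, IsOpen (D n) := by
      intro n
      rw [isOpen_iff_forall_mem_open]
      rintro x ⟨U, hU, hxU, hUg⟩
      exact ⟨U, fun y hy => ⟨U, hU, hy, hUg⟩, hU, hxU⟩
    have hinter : (⋂ n, D n) = ∅ := by
      apply Set.eq_empty_iff_forall_notMem.2
      intro x hx
      obtain ⟨δ, hδ, hsen⟩ := hpt x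
      obtain ⟨n, hn⟩ := exists_nat_gt δ⁻¹
      obtain ⟨U, hU, hxU, hUg⟩ := Set.mem_iInter.1 hx n
      obtain ⟨g, hg⟩ := hsen U hU hxU
      refine hUg g (le_trans (ENNReal.ofReal_le_ofReal ?_) hg)
      rw [inv_le_comm₀ (by positivity) hδ]
      exact le_trans hn.le (by linarith)
    have hnd : ∃ n, ¬ Dense (D n) := by
      by_contra h
      push_neg at h
      have hdd : Dense (⋂ n, D n) := dense_iInter_of_isOpen hopen h
      rw [hinter] at hdd
      exact (hdd.nonempty.ne_empty) rfl
    obtain ⟨n, hn⟩ := hnd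
    have hW : ∃ w : X, w ∉ closure (D n) := by
      by_contra h
      push_neg at h
      exact hn (fun x => h x)
    obtain ⟨w, hw⟩ := hW
    refine ⟨((n : ℝ) + 1)⁻¹, by positivity, ?_⟩
    intro U hU hUne
    obtain ⟨_, ⟨g, rfl⟩, hgU⟩ := hdense.exists_mem_open hU hUne
    obtain ⟨_, ⟨h, rfl⟩, hhW⟩ := hdense.exists_mem_open isClosed_closure.isOpen_compl ⟨w, hw⟩
    have hnotD : h • x₀ ∉ D n := fun hmem => hhW (subset_closure hmem)
    have hVopen : IsOpen ((h * g⁻¹) • U) := hU.smul (h * g⁻¹)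
    have hVmem : h • x₀ ∈ (h * g⁻¹) • U := by
      have hx := Set.smul_mem_smul_set (a := h * g⁻¹) hgU
      rwa [smul_smul, mul_assoc, inv_mul_cancel, mul_one] at hx
    by_contra hcon
    push_neg at hcon
    refine hnotD ⟨(h * g⁻¹) • U, hVopen, hVmem, ?_⟩
    intro k hk
    rw [smul_smul] at hk
    exact ((hcon (k * (h * g⁻¹))).trans_le hk).false
  · rintro ⟨δ, hδ, hsen⟩ x
    exact ⟨δ, hδ, fun U hU hxU => hsen U hU ⟨x, hxU⟩⟩
end

section
/- Let G be a group acting on a metric space (X, d) by homeomorphisms. If x ∈ X is a sensitive point of G with sensitivity constant δ = δ(x) > 0, then every point of the closure of the orbit G.x is also a sensitive point of G with the same sensitivity constant δ. -/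
open Pointwise

/-- `G` is sensitive at the point `x` with sensitivity constant `δ`: for every open
neighborhood `U` of `x` there is `g ∈ G` with `diam (g • U) ≥ δ`. -/
def SensitiveAtWith (G : Type*) {X : Type*} [Group G] [MulAction G X] [TopologicalSpace X]
    (d : X → X → ℝ) (δ : ℝ) (x : X) : Prop :=
  ∀ U : Set X, IsOpen U → x ∈ U →
    ∃ g : G, ENNReal.ofReal δ ≤ ediamD d (g • U)

/-- If `x` is a sensitive point of a group `G` acting by homeomorphisms on a metric space
`(X, d)`, with sensitivity constant `δ > 0`, then every point of the closure of the orbit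
`G.x` is a sensitive point with the same constant `δ`. -/
theorem sensitiveAt_closure_orbit {G X : Type*} [Group G] [MulAction G X] [MetricSpace X]
    (hcont : ∀ g : G, Continuous fun x : X => g • x)
    {δ : ℝ} (hδ : 0 < δ) {x : X}
    (hx : SensitiveAtWith G (dist : X → X → ℝ) δ x) :
    ∀ y ∈ closure (MulAction.orbit G x), SensitiveAtWith G (dist : X → X → ℝ) δ y := by
  intro y hy U hU hyU
  obtain ⟨p, hpU, hporb⟩ := mem_closure_iff.mp hy U hU hyU
  obtain ⟨g₀, hg₀⟩ := hporb
  have hxU : x ∈ g₀⁻¹ • U := by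
    rw [Set.mem_inv_smul_set_iff]; simpa [hg₀] using hpU
  have hopen : IsOpen (g₀⁻¹ • U) := by
    have : g₀⁻¹ • U = (fun z : X => g₀ • z) ⁻¹' U := by
      ext z; simp [Set.mem_smul_set_iff_inv_smul_mem]
    rw [this]
    exact hU.preimage (hcont g₀)
  obtain ⟨g, hg⟩ := hx (g₀⁻¹ • U) hopen hxU
  refine ⟨g * g₀⁻¹, ?_⟩
  rwa [smul_smul] at hg
end

section
/- Let (X, d) be a metric space and let G be a group acting on X by homeomorphisms having a dense non-closed orbit. Then G is sensitive to initial conditions if and only if there exists a sensitive point of G whose orbit is dense in X. -/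
open Pointwise

/-- For a group `G` acting by homeomorphisms on a metric space `(X, d)` and having a dense
non-closed orbit, `G` is sensitive to initial conditions if and only if there is a
sensitive point whose orbit is dense in `X`. -/
theorem sensitive_iff_exists_sensitive_denseOrbit {G X : Type*} [Group G] [MulAction G X]
    [MetricSpace X]
    (hcont : ∀ g : G, Continuous fun x : X => g • x)
    (hdno : ∃ x : X, Dense (MulAction.orbit G x) ∧ ¬ IsClosed (MulAction.orbit G x)) :
    SensitiveOn G (dist : X → X → ℝ) ↔
      ∃ x : X, SensitiveAt G (dist : X → X → ℝ) x ∧ Dense (MulAction.orbit G x) := by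
  constructor
  · rintro ⟨δ, hδ, hsens⟩
    obtain ⟨x, hdense, -⟩ := hdno
    exact ⟨x, ⟨δ, hδ, fun U hU hxU => hsens U hU ⟨x, hxU⟩⟩, hdense⟩
  · rintro ⟨x, ⟨δ, hδ, hsens⟩, hdense⟩
    refine ⟨δ, hδ, fun U hU hUne => ?_⟩
    obtain ⟨y, ⟨g₀, rfl⟩, hyU⟩ := hdense.exists_mem_open hU hUne
    have hopen : IsOpen (g₀⁻¹ • U) := by
      rw [← Set.preimage_smul]
      exact (hcont g₀).isOpen_preimage U hU
    have hx : x ∈ g₀⁻¹ • U := Set.mem_smul_set_iff_inv_smul_mem.mpr (by simpa using hyU)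
    obtain ⟨g, hg⟩ := hsens _ hopen hx
    exact ⟨g * g₀⁻¹, by rwa [mul_smul]⟩
end

section
/- Let (X, d) be a metric space and let G be a group acting on X by homeomorphisms. Assume G has a dense non-closed orbit and G is not sensitive to initial conditions. Then the set 𝒩𝒮 of insensitive (equicontinuous) points of G equals the set 𝒟 of points with dense orbit. If moreover (X, d) is a Baire space, then 𝒟 is a dense G_δ subset of X, and 𝒟 = X when every orbit of G is dense. -/
open Pointwise

lemma le_ediamD {X : Type*} (d : X → X → ℝ) {S : Set X} {y z : X}
    (hy : y ∈ S) (hz : z ∈ S) : ENNReal.ofReal (d y z) ≤ ediamD d S :=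
  le_iSup_of_le ⟨y, hy⟩ (le_iSup_of_le ⟨z, hz⟩ le_rfl)

lemma ediamD_smul_smul {G X : Type*} [Group G] [MulAction G X]
    (d : X → X → ℝ) (h g : G) (U : Set X) :
    ediamD d (h • g • U) = ediamD d ((h * g) • U) := by
  rw [smul_smul]

/-- Let `G` act by homeomorphisms on a metric space `(X, d)`, with a dense non-closed orbit,
and assume `G` is not sensitive to initial conditions. Then the set `𝒩𝒮` of insensitive
(equicontinuous) points equals the set `𝒟` of points with dense orbit; if moreover `X` is a
Baire space, then `𝒟` is a dense `G_δ` set, equal to `X` when every orbit is dense. -/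
theorem insensitive_eq_denseOrbits {G X : Type*} [Group G] [MulAction G X] [MetricSpace X]
    (hcont : ∀ g : G, Continuous fun x : X => g • x)
    (hdno : ∃ x : X, Dense (MulAction.orbit G x) ∧ ¬ IsClosed (MulAction.orbit G x))
    (hns : ¬ SensitiveOn G (dist : X → X → ℝ)) :
    {x : X | ¬ SensitiveAt G (dist : X → X → ℝ) x} = {x : X | Dense (MulAction.orbit G x)} ∧
    (BaireSpace X →
      Dense {x : X | Dense (MulAction.orbit G x)} ∧
      IsGδ {x : X | Dense (MulAction.orbit G x)} ∧
      ((∀ x : X, Dense (MulAction.orbit G x)) →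
        {x : X | Dense (MulAction.orbit G x)} = Set.univ)) := by
  haveI : ContinuousConstSMul G X := ⟨hcont⟩
  obtain ⟨x₀, hx₀, -⟩ := hdno
  -- From non-sensitivity: small sets exist
  rw [SensitiveOn] at hns
  push_neg at hns
  -- hns : ∀ δ, 0 < δ → ∃ U, IsOpen U ∧ U.Nonempty ∧ ∀ g, ediamD dist (g • U) < ENNReal.ofReal δ
  -- Key: D ⊆ NS
  have hDNS : ∀ x : X, Dense (MulAction.orbit G x) →
      ¬ SensitiveAt G (dist : X → X → ℝ) x := by
    rintro x hx ⟨δ, hδ, hsen⟩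
    obtain ⟨U, hUo, hUne, hUd⟩ := hns δ hδ
    obtain ⟨y, hyx, hyU⟩ := hx.exists_mem_open hUo hUne
    obtain ⟨g, rfl⟩ := hyx
    have hxmem : x ∈ g⁻¹ • U := by
      rw [Set.mem_smul_set_iff_inv_smul_mem, inv_inv]; exact hyU
    obtain ⟨h, hh⟩ := hsen (g⁻¹ • U) (hUo.smul g⁻¹) hxmem
    rw [ediamD_smul_smul] at hh
    exact absurd (lt_of_le_of_lt hh (hUd _)) (lt_irrefl _)
  -- Key: NS ⊆ D
  have hNSD : ∀ x : X, ¬ SensitiveAt G (dist : X → X → ℝ) x →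
      Dense (MulAction.orbit G x) := by
    intro x hx
    rw [SensitiveAt] at hx
    push_neg at hx
    rw [Metric.dense_iff]
    intro z r hr
    obtain ⟨U, hUo, hxU, hUd⟩ := hx (r / 2) (by positivity)
    obtain ⟨gx₀, hgx₀U⟩ := hx₀.exists_mem_open hUo ⟨x, hxU⟩
    obtain ⟨w, hw, hwball⟩ := hx₀.exists_mem_open Metric.isOpen_ball
      (Metric.nonempty_ball.2 (by positivity) : (Metric.ball z (r / 2)).Nonempty)
    obtain ⟨g, rfl⟩ := hgx₀U.1
    obtain ⟨k, rfl⟩ := hw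
    set h := k * g⁻¹ with hh
    have h1 : h • x ∈ h • U := Set.smul_mem_smul_set hxU
    have h2 : h • (g • x₀) ∈ h • U := Set.smul_mem_smul_set hgx₀U.2
    have hdd : ENNReal.ofReal (dist (h • x) (h • (g • x₀))) ≤ ediamD dist (h • U) :=
      le_ediamD dist h1 h2
    have hlt : dist (h • x) (h • (g • x₀)) < r / 2 := by
      have := lt_of_le_of_lt hdd (hUd h)
      rwa [ENNReal.ofReal_lt_ofReal_iff (by positivity)] at this
    have heq : h • (g • x₀) = k • x₀ := by rw [smul_smul, hh, inv_mul_cancel_right]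
    refine ⟨h • x, ?_, ⟨h, rfl⟩⟩
    rw [Metric.mem_ball]
    calc dist (h • x) z ≤ dist (h • x) (h • (g • x₀)) + dist (h • (g • x₀)) z :=
          dist_triangle _ _ _
      _ < r / 2 + r / 2 := by
          refine add_lt_add hlt ?_
          rw [heq]
          exact Metric.mem_ball.1 hwball
      _ = r := by ring
  have hEq : {x : X | ¬ SensitiveAt G (dist : X → X → ℝ) x}
      = {x : X | Dense (MulAction.orbit G x)} :=
    Set.ext fun x => ⟨hNSD x, hDNS x⟩
  refine ⟨hEq, fun hBaire => ?_⟩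
  -- the open sets
  set F : ℕ → Set X := fun n =>
    ⋃₀ {U : Set X | IsOpen U ∧ ∀ g : G, ediamD dist (g • U) < ENNReal.ofReal (1 / (n + 1))}
    with hF
  have hFopen : ∀ n, IsOpen (F n) := fun n =>
    isOpen_sUnion fun U hU => hU.1
  have hFdense : ∀ n, Dense (F n) := by
    intro n
    have hpos : (0 : ℝ) < 1 / (n + 1) := by positivity
    obtain ⟨U, hUo, hUne, hUd⟩ := hns _ hpos
    have : MulAction.orbit G x₀ ⊆ F n := by
      rintro - ⟨k, rfl⟩
      obtain ⟨y, ⟨g, rfl⟩, hyU⟩ := hx₀.exists_mem_open hUo hUne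
      refine ⟨(k * g⁻¹) • U, ⟨hUo.smul _, fun h => ?_⟩, ?_⟩
      · rw [ediamD_smul_smul]; exact hUd _
      · have : k • x₀ = (k * g⁻¹) • (g • x₀) := by rw [smul_smul, inv_mul_cancel_right]
        show k • x₀ ∈ _
        rw [this]; exact Set.smul_mem_smul_set hyU
    exact hx₀.mono this
  have hNSeq : {x : X | ¬ SensitiveAt G (dist : X → X → ℝ) x} = ⋂ n, F n := by
    ext x
    simp only [Set.mem_setOf_eq, Set.mem_iInter]
    constructor
    · intro hx n
      rw [SensitiveAt] at hx
      push_neg at hx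
      have hpos : (0 : ℝ) < 1 / (n + 1) := by positivity
      obtain ⟨U, hUo, hxU, hUd⟩ := hx _ hpos
      exact ⟨U, ⟨hUo, hUd⟩, hxU⟩
    · intro hx ⟨δ, hδ, hsen⟩
      obtain ⟨n, hn⟩ := exists_nat_one_div_lt hδ
      obtain ⟨U, ⟨hUo, hUd⟩, hxU⟩ := hx n
      obtain ⟨g, hg⟩ := hsen U hUo hxU
      have := lt_of_le_of_lt hg (hUd g)
      have h2 : ENNReal.ofReal (1 / (n + 1 : ℝ)) ≤ ENNReal.ofReal δ :=
        ENNReal.ofReal_le_ofReal hn.le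
      exact absurd (lt_of_lt_of_le this h2) (lt_irrefl _)
  rw [← hEq, hNSeq]
  exact ⟨dense_iInter_of_isOpen hFopen hFdense,
    IsGδ.iInter_of_isOpen hFopen,
    fun hall => Set.eq_univ_of_forall fun x => by
      rw [← hNSeq]; exact hDNS x (hall x) ⟩
end

section
/- Let (X, d) be a metric space that is a Baire space and let G be a group acting on X by homeomorphisms having a dense non-closed orbit. Then either G is almost equicontinuous (the set of equicontinuous points of G is dense in X) or G is sensitive to initial conditions. -/
open Pointwise

lemma ediamD_mono {X : Type*} {d : X → X → ℝ} {S T : Set X} (h : S ⊆ T) :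
    ediamD d S ≤ ediamD d T := by
  refine iSup_le fun y => iSup_le fun z => ?_
  exact le_iSup_of_le ⟨y.1, h y.2⟩ (le_iSup_of_le ⟨z.1, h z.2⟩ le_rfl)

theorem almostEquicontinuous_or_sensitive' {G X : Type*} [Group G] [MulAction G X]
    [MetricSpace X] [BaireSpace X]
    (hcont : ∀ g : G, Continuous fun x : X => g • x)
    (hdno : ∃ x : X, Dense (MulAction.orbit G x) ∧ ¬ IsClosed (MulAction.orbit G x)) :
    Dense {x : X | ¬ SensitiveAt G (dist : X → X → ℝ) x} ∨
      SensitiveOn G (dist : X → X → ℝ) := by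
  haveI : ContinuousConstSMul G X := ⟨hcont⟩
  set A : ℕ → Set X := fun n => {x | ∃ U : Set X, IsOpen U ∧ x ∈ U ∧
    ∀ g : G, ediamD (dist : X → X → ℝ) (g • U) < ENNReal.ofReal (1 / (n + 1))} with hA
  have hAopen : ∀ n, IsOpen (A n) := by
    intro n
    rw [isOpen_iff_forall_mem_open]
    rintro x ⟨U, hUo, hxU, hU⟩
    exact ⟨U, fun y hy => ⟨U, hUo, hy, hU⟩, hUo, hxU⟩
  by_cases hdense : ∀ n, Dense (A n)
  · left
    have hbaire : Dense (⋂ n, A n) := dense_iInter_of_isOpen hAopen hdense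
    refine hbaire.mono fun x hx => ?_
    rintro ⟨δ, hδ, hsens⟩
    obtain ⟨n, hn⟩ := exists_nat_one_div_lt hδ
    have hxn := Set.mem_iInter.mp hx n
    obtain ⟨U, hUo, hxU, hU⟩ := hxn
    obtain ⟨g, hg⟩ := hsens U hUo hxU
    exact absurd (lt_of_lt_of_le (hU g) (ENNReal.ofReal_le_ofReal hn.le)) (not_lt.mpr hg)
  · right
    push_neg at hdense
    obtain ⟨n, hn⟩ := hdense
    rw [dense_iff_inter_open] at hn
    push_neg at hn
    obtain ⟨W, hWo, hWne, hWA⟩ := hn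
    have hWA' : ∀ x ∈ W, x ∉ A n := fun x hx hxA =>
      Set.eq_empty_iff_forall_notMem.mp hWA x ⟨hx, hxA⟩
    -- every nonempty open subset of W is stretched
    have key : ∀ V : Set X, IsOpen V → V.Nonempty → V ⊆ W →
        ∃ g : G, ENNReal.ofReal (1 / (n + 1)) ≤ ediamD (dist : X → X → ℝ) (g • V) := by
      intro V hVo ⟨x, hxV⟩ hVW
      have hxA := hWA' x (hVW hxV)
      simp only [hA, Set.mem_setOf_eq, not_exists] at hxA
      have := hxA V
      push_neg at this
      exact this hVo hxV
    obtain ⟨x₀, hd, -⟩ := hdno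
    refine ⟨1 / (n + 1), by positivity, fun U hUo hUne => ?_⟩
    obtain ⟨u, huU, g, rfl⟩ := hd.inter_open_nonempty U hUo hUne
    obtain ⟨w, hwW, h, rfl⟩ := hd.inter_open_nonempty W hWo hWne
    set k : G := h * g⁻¹ with hk
    have hkU : IsOpen (k • U) := hUo.smul k
    have hmem : h • x₀ ∈ k • U := by
      refine ⟨g • x₀, huU, ?_⟩
      show k • (g • x₀) = h • x₀
      rw [smul_smul, hk, inv_mul_cancel_right]
    have hVne : ((k • U) ∩ W).Nonempty := ⟨h • x₀, hmem, hwW⟩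
    obtain ⟨g', hg'⟩ := key ((k • U) ∩ W) (hkU.inter hWo) hVne Set.inter_subset_right
    refine ⟨g' * k, le_trans hg' (ediamD_mono ?_)⟩
    have hms : (g' * k) • U = g' • (k • U) := mul_smul g' k U
    rw [hms]
    exact Set.smul_set_mono Set.inter_subset_left


/-- A group `G` acting by homeomorphisms on a metric Baire space `(X, d)` with a dense
non-closed orbit is either almost equicontinuous (its set of equicontinuous points is
dense) or sensitive to initial conditions. -/
theorem almostEquicontinuous_or_sensitive {G X : Type*} [Group G] [MulAction G X]
    [MetricSpace X] [BaireSpace X]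
    (hcont : ∀ g : G, Continuous fun x : X => g • x)
    (hdno : ∃ x : X, Dense (MulAction.orbit G x) ∧ ¬ IsClosed (MulAction.orbit G x)) :
    Dense {x : X | ¬ SensitiveAt G (dist : X → X → ℝ) x} ∨
      SensitiveOn G (dist : X → X → ℝ) := by
  exact almostEquicontinuous_or_sensitive' hcont hdno
end

section
/- Let X be a locally compact Polish space and let G be a group acting on X by homeomorphisms. If G is topologically transitive on X and the union of the minimal sets of G is a dense proper subset of X, then G is sensitive to initial conditions with respect to every metric inducing the topology of X. -/
open Pointwise

/-- A group `G` acting on a topological space `X` is topologically transitive. -/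
def TopTransitive (G X : Type*) [Group G] [MulAction G X] [TopologicalSpace X] : Prop :=
  ∀ U V : Set X, IsOpen U → IsOpen V → U.Nonempty → V.Nonempty →
    ∃ g : G, ((g • U) ∩ V).Nonempty

private lemma smul_set_open' {G X : Type*} [Group G] [MulAction G X] [TopologicalSpace X]
    (hcont : ∀ g : G, Continuous fun x : X => g • x) (g : G) {U : Set X} (hU : IsOpen U) :
    IsOpen (g • U) := by
  have h : g • U = (fun x : X => g⁻¹ • x) ⁻¹' U := by
    ext x
    simp [Set.mem_smul_set_iff_inv_smul_mem]
  rw [h]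
  exact hU.preimage (hcont g⁻¹)

private lemma dist_lt_of_ediamD_lt {X : Type*} {d : X → X → ℝ} {S : Set X} {δ : ℝ}
    (h : ediamD d S < ENNReal.ofReal δ) (hδ : 0 < δ) {a b : X} (ha : a ∈ S) (hb : b ∈ S) :
    d a b < δ := by
  have h1 : ENNReal.ofReal (d a b) ≤ ediamD d S := by
    calc ENNReal.ofReal (d a b)
        ≤ ⨆ (z : S), ENNReal.ofReal (d a z.1) :=
          le_iSup (fun z : S => ENNReal.ofReal (d a z.1)) ⟨b, hb⟩
      _ ≤ ediamD d S :=
          le_iSup (fun y : S => ⨆ (z : S), ENNReal.ofReal (d y.1 z.1)) ⟨a, ha⟩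
  exact (ENNReal.ofReal_lt_ofReal_iff hδ).mp (lt_of_le_of_lt h1 h)

/-- Let `X` be a locally compact Polish space and `G` a group acting on `X` by
homeomorphisms. If `G` is topologically transitive and the union of its minimal sets is a
dense proper subset of `X`, then `G` is sensitive to initial conditions with respect to
every metric inducing the topology of `X`. -/
theorem sensitive_of_transitive_denseMinimalSets {G X : Type*} [Group G] [MulAction G X]
    [TopologicalSpace X] [PolishSpace X] [LocallyCompactSpace X]
    (hcont : ∀ g : G, Continuous fun x : X => g • x)
    (htrans : TopTransitive G X)
    (hdense : Dense {x : X | ∃ M : Set X, IsMinimalSet G M ∧ x ∈ M})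
    (hproper : {x : X | ∃ M : Set X, IsMinimalSet G M ∧ x ∈ M} ≠ Set.univ) :
    ∀ ρ : X → X → ℝ,
      (∀ x y, ρ x y = ρ y x) →
      (∀ x y, ρ x y = 0 ↔ x = y) →
      (∀ x y z, ρ x z ≤ ρ x y + ρ y z) →
      (∀ s : Set X, IsOpen s ↔ ∀ x ∈ s, ∃ ε > 0, ∀ y, ρ x y < ε → y ∈ s) →
      SensitiveOn G ρ := by
  intro ρ hsymm hzero htri htop
  by_contra hs
  unfold SensitiveOn at hs
  push_neg at hs
  -- hs : ∀ δ, 0 < δ → ∃ U, IsOpen U ∧ U.Nonempty ∧ ∀ g, ediamD ρ (g • U) < ENNReal.ofReal δ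
  have hXne : Nonempty X := by
    rcases isEmpty_or_nonempty X with h | h
    · exact absurd (Set.eq_univ_of_forall fun x => isEmptyElim x) hproper
    · exact h
  letI : MetricSpace X :=
    MetricSpace.ofDistTopology ρ (fun x => (hzero x x).mpr rfl) hsymm htri htop
      (fun x y h => (hzero x y).mp h)
  haveI : BaireSpace X := inferInstance
  -- equicontinuity witness sets
  set E : ℕ → Set X := fun n =>
    {x | ∃ U : Set X, IsOpen U ∧ x ∈ U ∧
      ∀ g : G, ediamD ρ (g • U) < ENNReal.ofReal (1 / (n + 1))} with hE
  have hEo : ∀ n, IsOpen (E n) := by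
    intro n
    rw [isOpen_iff_forall_mem_open]
    rintro x ⟨U, hUo, hxU, hUb⟩
    exact ⟨U, fun y hy => ⟨U, hUo, hy, hUb⟩, hUo, hxU⟩
  have hEd : ∀ n, Dense (E n) := by
    intro n
    rw [dense_iff_inter_open]
    intro V hVo hVne
    obtain ⟨U₀, hU₀o, hU₀ne, hU₀b⟩ := hs (1 / (n + 1)) (by positivity)
    obtain ⟨g₀, x, hx1, hx2⟩ := htrans U₀ V hU₀o hVo hU₀ne hVne
    refine ⟨x, hx2, g₀ • U₀, smul_set_open' hcont g₀ hU₀o, hx1, ?_⟩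
    intro g
    rw [smul_smul]
    exact hU₀b (g * g₀)
  -- transitivity witness sets
  set Bas := TopologicalSpace.countableBasis X with hBas
  haveI : Countable Bas := (TopologicalSpace.countable_countableBasis X).to_subtype
  set W : Bas → Set X := fun B => ⋃ g : G, g • (B : Set X) with hW
  have hWo : ∀ B, IsOpen (W B) := fun B =>
    isOpen_iUnion fun g => smul_set_open' hcont g
      (TopologicalSpace.isOpen_of_mem_countableBasis B.2)
  have hWd : ∀ B, Dense (W B) := by
    intro B
    rw [dense_iff_inter_open]
    intro V hVo hVne
    have hBo : IsOpen (B : Set X) := TopologicalSpace.isOpen_of_mem_countableBasis B.2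
    have hBne : (B : Set X).Nonempty := TopologicalSpace.nonempty_of_mem_countableBasis B.2
    obtain ⟨g, x, hx1, hx2⟩ := htrans B V hBo hVo hBne hVne
    exact ⟨x, hx2, Set.mem_iUnion.mpr ⟨g, hx1⟩⟩
  -- a point q which is both a transitive point and a full equicontinuity point
  have hdense_all : Dense (⋂ i : ℕ ⊕ Bas, Sum.elim E W i) := by
    apply dense_iInter_of_isOpen
    · rintro (n | B)
      · exact hEo n
      · exact hWo B
    · rintro (n | B)
      · exact hEd n
      · exact hWd B
  obtain ⟨q, hq⟩ := hdense_all.nonempty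
  have hqE : ∀ n, q ∈ E n := fun n => Set.mem_iInter.mp hq (Sum.inl n)
  have hqW : ∀ B, q ∈ W B := fun B => Set.mem_iInter.mp hq (Sum.inr B)
  have horb : Dense (MulAction.orbit G q) := by
    rw [dense_iff_inter_open]
    intro V hVo hVne
    obtain ⟨x, hxV⟩ := hVne
    obtain ⟨B, hBmem, hxB, hBV⟩ :=
      (TopologicalSpace.isBasis_countableBasis X).exists_subset_of_mem_open hxV hVo
    obtain ⟨g, hg⟩ := Set.mem_iUnion.mp (hqW ⟨B, hBmem⟩)
    exact ⟨g⁻¹ • q, hBV (Set.mem_smul_set_iff_inv_smul_mem.mp hg), MulAction.mem_orbit q g⁻¹⟩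
  -- key claim : q is in the closure of every orbit
  have key : ∀ y : X, q ∈ closure (MulAction.orbit G y) := by
    intro y
    rw [Metric.mem_closure_iff]
    intro ε hε
    obtain ⟨K, hKc, hKn⟩ := exists_compact_mem_nhds y
    obtain ⟨η, hη, hball⟩ := Metric.mem_nhds_iff.mp hKn
    set ε1 := min (ε / 4) (η / 3) with hε1def
    have hε1 : 0 < ε1 := lt_min (by linarith) (by linarith)
    obtain ⟨n, hn⟩ := exists_nat_one_div_lt hε1
    obtain ⟨U, hUo, hqU, hUb⟩ := hqE n
    have hsync : ∀ (g : G) {a b : X}, a ∈ U → b ∈ U → dist (g • a) (g • b) ≤ ε1 := by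
      intro g a b ha hb
      have h1 : ρ (g • a) (g • b) < 1 / (n + 1) :=
        dist_lt_of_ediamD_lt (hUb g) (by positivity)
          (Set.smul_mem_smul_set ha) (Set.smul_mem_smul_set hb)
      exact le_of_lt (lt_trans h1 hn)
    obtain ⟨q', hq'S, hq'U⟩ := hdense.exists_mem_open hUo ⟨q, hqU⟩
    obtain ⟨P, hP, hq'P⟩ := hq'S
    obtain ⟨u, humem, hulim⟩ := mem_closure_iff_seq_limit.mp (horb y)
    choose g hgq using fun k => MulAction.mem_orbit_iff.mp (humem k)
    obtain ⟨N, hN⟩ := Metric.tendsto_atTop.mp hulim (η / 3) (by linarith)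
    set w : ℕ → X := fun k => g (k + N) • q' with hwdef
    have hwP : ∀ k, w k ∈ P := fun k => hP.2.2.1 (g (k + N)) ⟨q', hq'P, rfl⟩
    have hwK : ∀ k, w k ∈ K := by
      intro k
      apply hball
      have h1 : dist (w k) (u (k + N)) ≤ ε1 := by
        rw [← hgq (k + N)]
        exact hsync (g (k + N)) hq'U hqU
      have h2 : dist (u (k + N)) y < η / 3 := hN (k + N) (Nat.le_add_left N k)
      have h3 : ε1 ≤ η / 3 := min_le_right _ _
      have := dist_triangle (w k) (u (k + N)) y
      simp only [Metric.mem_ball]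
      linarith
    obtain ⟨z, hzK, φ, hφ, hconv⟩ := hKc.tendsto_subseq hwK
    have hzP : z ∈ P :=
      hP.2.1.mem_of_tendsto hconv (Filter.Eventually.of_forall fun k => hwP (φ k))
    have hulim' : Filter.Tendsto (fun k => u (φ k + N)) Filter.atTop (nhds y) := by
      apply hulim.comp
      apply Filter.tendsto_atTop_mono (fun k => Nat.le_add_right (φ k) N)
      exact hφ.tendsto_atTop
    have hsyncyz : ∀ h : G, dist (h • y) (h • z) ≤ ε1 := by
      intro h
      have ha : Filter.Tendsto (fun k => h • u (φ k + N)) Filter.atTop (nhds (h • y)) :=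
        ((hcont h).tendsto y).comp hulim'
      have hb : Filter.Tendsto (fun k => h • w (φ k)) Filter.atTop (nhds (h • z)) :=
        ((hcont h).tendsto z).comp hconv
      have hle : ∀ k, dist (h • u (φ k + N)) (h • w (φ k)) ≤ ε1 := by
        intro k
        rw [← hgq (φ k + N)]
        show dist (h • g (φ k + N) • q) (h • g (φ k + N) • q') ≤ ε1
        rw [smul_smul, smul_smul]
        exact hsync (h * g (φ k + N)) hqU hq'U
      exact le_of_tendsto (ha.dist hb) (Filter.Eventually.of_forall hle)
    have hq'cz : q' ∈ closure (MulAction.orbit G z) := hP.2.2.2 z hzP hq'P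
    obtain ⟨b, hbmem, hbd⟩ := Metric.mem_closure_iff.mp hq'cz ε1 hε1
    obtain ⟨h₀, rfl⟩ := MulAction.mem_orbit_iff.mp hbmem
    refine ⟨h₀ • y, MulAction.mem_orbit y h₀, ?_⟩
    have d1 : dist (h₀ • y) (h₀ • z) ≤ ε1 := hsyncyz h₀
    have d2 : dist q' (h₀ • z) < ε1 := hbd
    have d3 : dist q' q ≤ ε1 := by
      have := hsync 1 hq'U hqU
      simpa using this
    have h4 : ε1 ≤ ε / 4 := min_le_left _ _
    calc dist q (h₀ • y) ≤ dist q q' + dist q' (h₀ • z) + dist (h₀ • z) (h₀ • y) :=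
          dist_triangle4 q q' (h₀ • z) (h₀ • y)
      _ < ε := by
          rw [dist_comm q q', dist_comm (h₀ • z) (h₀ • y)]
          linarith
  -- hence every orbit is dense, so univ is a minimal set
  have huniv : ∀ y : X, (Set.univ : Set X) ⊆ closure (MulAction.orbit G y) := by
    intro y
    have h1 : MulAction.orbit G q ⊆ closure (MulAction.orbit G y) := by
      rintro _ ⟨g, rfl⟩
      have h2 : (g • ·) '' closure (MulAction.orbit G y) ⊆
          closure ((g • ·) '' MulAction.orbit G y) :=
        image_closure_subset_closure_image (hcont g)
      have h3 : (g • ·) '' MulAction.orbit G y ⊆ MulAction.orbit G y := by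
        rintro _ ⟨w, ⟨h, rfl⟩, rfl⟩
        show g • h • y ∈ MulAction.orbit G y
        rw [smul_smul]
        exact MulAction.mem_orbit y (g * h)
      have h4 : g • q ∈ (g • ·) '' closure (MulAction.orbit G y) := ⟨q, key y, rfl⟩
      exact closure_mono h3 (h2 h4)
    rw [← horb.closure_eq]
    exact closure_minimal h1 isClosed_closure
  have hMuniv : IsMinimalSet G (Set.univ : Set X) :=
    ⟨Set.univ_nonempty, isClosed_univ, fun g => Set.subset_univ _, fun x _ => huniv x⟩
  exact hproper (Set.eq_univ_of_forall fun x => ⟨Set.univ, hMuniv, Set.mem_univ x⟩)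
end

section
/- Let (X_i, d̃_i), i = 1, …, m, be finitely many metric spaces with each d̃_i bounded by 1, equip X = ∏_{i=1}^m X_i with the product metric d(x, y) = Σ_{i=1}^m 2^{-i} d̃_i(x_i, y_i), and let G_i be a group acting on X_i by homeomorphisms for each i. Then the direct product group G = ∏_{i=1}^m G_i, acting canonically on X, is sensitive to initial conditions on (X, d) if and only if there exists n with 1 ≤ n ≤ m such that G_n is sensitive to initial conditions on (X_n, d̃_n). -/
open Pointwise

lemma ediamD_le {X : Type*} {d : X → X → ℝ} {S : Set X} {C : ENNReal}
    (h : ∀ y ∈ S, ∀ z ∈ S, ENNReal.ofReal (d y z) ≤ C) : ediamD d S ≤ C :=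
  iSup_le fun y => iSup_le fun z => h y.1 y.2 z.1 z.2

lemma half_geom_sum (m : ℕ) :
    ∑ i ∈ Finset.range m, (1 / 2 : ℝ) ^ (i + 1) = 1 - (1 / 2 : ℝ) ^ m := by
  induction m with
  | zero => simp
  | succ k ih => rw [Finset.sum_range_succ, ih]; ring

/-- Let `(X_i, dist)`, `i = 1, …, m`, be finitely many metric spaces with metrics bounded
by `1`, acted on by homeomorphisms by groups `G_i`, and equip `X = ∏ X_i` with the product
metric `d(x, y) = Σ_i 2⁻ⁱ dist (x_i) (y_i)`. Then the direct product group `∏ G_i`, acting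
canonically on `X`, is sensitive to initial conditions on `(X, d)` if and only if some
`G_n` is sensitive to initial conditions on `(X_n, dist)`. -/
theorem finiteProduct_sensitive_iff {m : ℕ} {X G : Fin m → Type*}
    [∀ i, MetricSpace (X i)] [∀ i, Group (G i)] [∀ i, MulAction (G i) (X i)]
    (hbdd : ∀ (i : Fin m) (x y : X i), dist x y ≤ 1)
    (hcont : ∀ (i : Fin m) (g : G i), Continuous fun x : X i => g • x)
    (d : (∀ i, X i) → (∀ i, X i) → ℝ)
    (hd : ∀ x y, d x y = ∑ i : Fin m, (1 / 2 : ℝ) ^ ((i : ℕ) + 1) * dist (x i) (y i)) :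
    SensitiveOn (∀ i, G i) d ↔
      ∃ n : Fin m, SensitiveOn (G n) (dist : X n → X n → ℝ) := by
  classical
  constructor
  · rintro ⟨δ, hδ, hsen⟩
    by_contra hno
    push_neg at hno
    have hchoice : ∀ i : Fin m, ∃ U : Set (X i), IsOpen U ∧ U.Nonempty ∧
        ∀ g : G i, ediamD (dist : X i → X i → ℝ) (g • U) < ENNReal.ofReal δ := by
      intro i
      have h := hno i
      unfold SensitiveOn at h
      push_neg at h
      obtain ⟨U, hU, hne, hg⟩ := h δ hδ
      exact ⟨U, hU, hne, hg⟩
    choose U hUopen hUne hUdiam using hchoice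
    choose x hx using hUne
    set B : Set (∀ i, X i) := Set.pi Set.univ U with hB
    have hBopen : IsOpen B := isOpen_set_pi Set.finite_univ fun i _ => hUopen i
    have hBne : B.Nonempty := ⟨x, fun i _ => hx i⟩
    obtain ⟨g, hg⟩ := hsen B hBopen hBne
    have hsmul : g • B = Set.pi Set.univ (fun i => g i • U i) := by
      ext y
      rw [Set.mem_smul_set_iff_inv_smul_mem]
      simp only [hB, Set.mem_pi, Set.mem_univ, true_implies]
      refine forall_congr' fun i => ?_
      rw [Set.mem_smul_set_iff_inv_smul_mem]
      rfl
    set s : ℝ := ∑ i : Fin m, (1 / 2 : ℝ) ^ ((i : ℕ) + 1) with hs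
    have hbound : ediamD d (g • B) ≤ ENNReal.ofReal (s * δ) := by
      apply ediamD_le
      intro y hy z hz
      rw [hsmul, Set.mem_pi] at hy hz
      rw [hd]
      have hnn : ∀ i ∈ Finset.univ, (0:ℝ) ≤ (1 / 2 : ℝ) ^ ((i : Fin m) : ℕ).succ *
          dist (y i) (z i) := fun i _ => by positivity
      calc ENNReal.ofReal (∑ i : Fin m, (1 / 2 : ℝ) ^ ((i : ℕ) + 1) * dist (y i) (z i))
          = ∑ i : Fin m, ENNReal.ofReal ((1 / 2 : ℝ) ^ ((i : ℕ) + 1) * dist (y i) (z i)) :=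
            ENNReal.ofReal_sum_of_nonneg (fun i _ => by positivity)
        _ ≤ ∑ i : Fin m, ENNReal.ofReal ((1 / 2 : ℝ) ^ ((i : ℕ) + 1) * δ) := by
            refine Finset.sum_le_sum fun i _ => ?_
            rw [ENNReal.ofReal_mul (by positivity), ENNReal.ofReal_mul (by positivity)]
            refine mul_le_mul_right ?_ _
            exact (le_ediamD _ (hy i (Set.mem_univ i)) (hz i (Set.mem_univ i))).trans
              (hUdiam i (g i)).le
        _ = ENNReal.ofReal (∑ i : Fin m, (1 / 2 : ℝ) ^ ((i : ℕ) + 1) * δ) :=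
            (ENNReal.ofReal_sum_of_nonneg (fun i _ => by positivity)).symm
        _ = ENNReal.ofReal (s * δ) := by rw [hs, ← Finset.sum_mul]
    have hslt : s < 1 := by
      rw [hs, Fin.sum_univ_eq_sum_range (fun i => (1 / 2 : ℝ) ^ (i + 1)) m, half_geom_sum]
      have : (0:ℝ) < (1/2)^m := by positivity
      linarith
    have hsd : s * δ < δ := by
      have hs0 : 0 ≤ s := by
        rw [hs]; exact Finset.sum_nonneg fun i _ => by positivity
      nlinarith
    have := hg.trans hbound
    rw [ENNReal.ofReal_le_ofReal_iff (by positivity)] at this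
    linarith
  · rintro ⟨n, δn, hδn, hsn⟩
    refine ⟨(1 / 2 : ℝ) ^ ((n : ℕ) + 1) * δn, by positivity, ?_⟩
    intro Uset hUopen hUne
    obtain ⟨x, hxU⟩ := hUne
    obtain ⟨I, u, hu, hsub⟩ := isOpen_pi_iff.mp hUopen x hxU
    set V : ∀ i, Set (X i) := fun i => if i ∈ I then u i else Set.univ with hV
    have hVsub : Set.pi Set.univ V ⊆ Uset := by
      intro y hy
      apply hsub
      intro i hi
      have h := hy i (Set.mem_univ i)
      have hi' : i ∈ I := hi
      rw [hV] at h
      simp only [if_pos hi'] at h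
      exact h
    have hVopen : ∀ i, IsOpen (V i) := by
      intro i
      by_cases h : i ∈ I
      · simpa [hV, h] using (hu i h).1
      · simp [hV, h]
    have hxV : ∀ i, x i ∈ V i := by
      intro i
      by_cases h : i ∈ I
      · simpa [hV, h] using (hu i h).2
      · simp [hV, h]
    obtain ⟨gn, hgn⟩ := hsn (V n) (hVopen n) ⟨x n, hxV n⟩
    set g : ∀ i, G i := Pi.mulSingle n gn with hgdef
    refine ⟨g, ?_⟩
    have key : ∀ a ∈ gn • V n, ∀ b ∈ gn • V n,
        ENNReal.ofReal ((1 / 2 : ℝ) ^ ((n : ℕ) + 1) * dist a b) ≤ ediamD d (g • Uset) := by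
      rintro a ⟨a', ha', rfl⟩ b ⟨b', hb', rfl⟩
      set y : ∀ i, X i := g • Function.update x n a' with hy
      set z : ∀ i, X i := g • Function.update x n b' with hz
      have hyU : y ∈ g • Uset := Set.smul_mem_smul_set (hVsub fun i _ => by
        by_cases h : i = n
        · subst h; simpa using ha'
        · simpa [Function.update_of_ne h] using hxV i)
      have hzU : z ∈ g • Uset := Set.smul_mem_smul_set (hVsub fun i _ => by
        by_cases h : i = n
        · subst h; simpa using hb'
        · simpa [Function.update_of_ne h] using hxV i)
      have hdyz : d y z = (1 / 2 : ℝ) ^ ((n : ℕ) + 1) * dist (gn • a') (gn • b') := by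
        rw [hd]
        have hyn : y n = gn • a' := by
          rw [hy, hgdef]; simp [Pi.smul_apply']
        have hzn : z n = gn • b' := by
          rw [hz, hgdef]; simp [Pi.smul_apply']
        rw [Finset.sum_eq_single n]
        · rw [hyn, hzn]
        · intro i _ hin
          have h1 : y i = x i := by
            rw [hy, hgdef]
            simp [Pi.smul_apply', Pi.mulSingle_eq_of_ne hin, Function.update_of_ne hin]
          have h2 : z i = x i := by
            rw [hz, hgdef]
            simp [Pi.smul_apply', Pi.mulSingle_eq_of_ne hin, Function.update_of_ne hin]
          rw [h1, h2]
          simp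
        · intro h
          exact absurd (Finset.mem_univ n) h
      rw [← hdyz]
      exact le_ediamD d hyU hzU
    calc ENNReal.ofReal ((1 / 2 : ℝ) ^ ((n : ℕ) + 1) * δn)
        = ENNReal.ofReal ((1 / 2 : ℝ) ^ ((n : ℕ) + 1)) * ENNReal.ofReal δn :=
          ENNReal.ofReal_mul (by positivity)
      _ ≤ ENNReal.ofReal ((1 / 2 : ℝ) ^ ((n : ℕ) + 1)) *
            ediamD (dist : X n → X n → ℝ) (gn • V n) := mul_le_mul_right hgn _
      _ ≤ ediamD d (g • Uset) := by
          rw [ediamD, ENNReal.mul_iSup]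
          refine iSup_le fun a => ?_
          rw [ENNReal.mul_iSup]
          refine iSup_le fun b => ?_
          rw [← ENNReal.ofReal_mul (by positivity)]
          exact key a.1 a.2 b.1 b.2
end

section
/- Let J ⊆ ℕ, let (X_i, d̃_i), i ∈ J, be metric spaces with each d̃_i bounded by 1, let G_i be a group acting on X_i by homeomorphisms, and equip X = ∏_{i∈J} X_i with the product metric d(x, y) = Σ_{i∈J} 2^{-i} d̃_i(x_i, y_i). Assume every G_i is chaotic on X_i, and assume there exists n ∈ J such that (X_n, d̃_n) is a locally compact metric space that is a Baire space. Then the direct product group G = ∏_{i∈J} G_i, acting canonically on X, is chaotic on X and sensitive to initial conditions on (X, d). -/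
open Pointwise

open MulAction Metric Filter in

lemma factor_sensitive {Y H : Type*} [MetricSpace Y] [Group H] [MulAction H Y]
    (hc : ∀ g : H, Continuous fun y : Y => g • y)
    (hch : Chaotic H Y) (hLC : LocallyCompactSpace Y) :
    ∃ δ : ℝ, 0 < δ ∧ ∀ U : Set Y, IsOpen U → U.Nonempty →
      ∃ (g : H) (u v : Y), u ∈ U ∧ v ∈ U ∧ δ ≤ dist (g • u) (g • v) := by
  by_contra hsens
  push_neg at hsens
  obtain ⟨⟨x₀, hx₀dense, hx₀ncl⟩, hE⟩ := hch
  -- key claim: for every z and ε > 0 there is a closed orbit `orbit H c` which is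
  -- 2ε-dense, together with a point p of that orbit whose orbit uniformly ε-shadows z.
  have key : ∀ (z : Y) (ε : ℝ), 0 < ε → ∃ (c p : Y), IsClosed (MulAction.orbit H c) ∧
      p ∈ MulAction.orbit H c ∧ (∀ g : H, dist (g • z) (g • p) ≤ ε) ∧
      (∀ w : Y, ∃ g : H, dist w (g • c) < 2 * ε) := by
    intro z ε hε
    obtain ⟨K, hKc, hKnhds⟩ := exists_compact_mem_nhds z
    obtain ⟨ρ₀, hρ₀, hball⟩ := Metric.mem_nhds_iff.1 hKnhds
    set ρ := ρ₀ / 2 with hρdef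
    have hρ : 0 < ρ := by positivity
    have hKball : IsCompact (closedBall z ρ) := by
      refine hKc.of_isClosed_subset Metric.isClosed_closedBall ?_
      exact subset_trans (closedBall_subset_ball (by simp [hρdef]; linarith)) hball
    set ε' := min ε (ρ / 2) with hε'def
    have hε' : 0 < ε' := lt_min hε (by positivity)
    have hε'ε : ε' ≤ ε := min_le_left _ _
    have hε'ρ : ε' ≤ ρ / 2 := min_le_right _ _
    obtain ⟨U, hUopen, hUne, hU⟩ := hsens ε' hε'
    -- a point of the dense orbit in U
    obtain ⟨u, hu_orbit, huU⟩ := hx₀dense.exists_mem_open hUopen hUne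
    obtain ⟨γ, hγ'⟩ := hu_orbit
    have hγ : γ • x₀ = u := hγ'
    -- a closed-orbit point in U
    obtain ⟨q, hq_mem, hqU⟩ := hE.exists_mem_open hUopen hUne
    simp only [Set.mem_iUnion, Set.mem_setOf_eq] at hq_mem
    obtain ⟨c₀, hc₀cl, hqc₀⟩ := hq_mem
    have hqcl : IsClosed (MulAction.orbit H q) := by
      rw [MulAction.orbit_eq_iff.2 hqc₀]; exact hc₀cl
    set c := q
    -- density of `orbit H c` at scale 2ε
    have hCdense : ∀ w : Y, ∃ g : H, dist w (g • c) < 2 * ε := by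
      intro w
      obtain ⟨y, hyb, hyo⟩ := Metric.dense_iff.1 hx₀dense w ε hε
      obtain ⟨g', hg''⟩ := hyo
      have hg' : g' • x₀ = y := hg''
      refine ⟨g' * γ⁻¹, ?_⟩
      have h1 : (g' * γ⁻¹) • u = g' • x₀ := by
        rw [← hγ, smul_smul, inv_mul_cancel_right]
      have h2 : dist ((g' * γ⁻¹) • u) ((g' * γ⁻¹) • c) < ε' := hU _ _ _ huU hqU
      have hw : dist w ((g' * γ⁻¹) • u) < ε := by
        rw [h1, hg', dist_comm]
        simpa [Metric.mem_ball] using hyb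
      calc dist w ((g' * γ⁻¹) • c)
          ≤ dist w ((g' * γ⁻¹) • u) + dist ((g' * γ⁻¹) • u) ((g' * γ⁻¹) • c) :=
            dist_triangle _ _ _
        _ < ε + ε' := add_lt_add_of_lt_of_lt hw h2
        _ ≤ 2 * ε := by linarith [hε'ε]
    -- approximating sequence for z from the dense orbit
    have happrox : ∀ m : ℕ, ∃ g : H, dist (g • x₀) z < min (1 / (m + 1 : ℝ)) (ρ / 2) := by
      intro m
      have hpos : 0 < min (1 / (m + 1 : ℝ)) (ρ / 2) := by
        refine lt_min (by positivity) (by positivity)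
      obtain ⟨y, hyb, hyo⟩ := Metric.dense_iff.1 hx₀dense z _ hpos
      obtain ⟨g', hg''⟩ := hyo
      have hg' : g' • x₀ = y := hg''
      exact ⟨g', by rw [hg']; simpa [Metric.mem_ball, lt_min_iff] using hyb⟩
    choose γs hγs using happrox
    obtain ⟨β, hβdef⟩ : ∃ β : ℕ → H, ∀ m, β m = γs m * γ⁻¹ := ⟨_, fun _ => rfl⟩
    have hβu : ∀ m, β m • u = γs m • x₀ := by
      intro m
      rw [hβdef m, ← hγ, smul_smul, inv_mul_cancel_right]
    have hmem : ∀ m, β m • c ∈ closedBall z ρ := by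
      intro m
      have h2 : dist (β m • u) (β m • c) < ε' := hU _ _ _ huU hqU
      have h3 : dist (β m • u) z < ρ / 2 := by
        rw [hβu m]; exact lt_of_lt_of_le (hγs m) (min_le_right _ _)
      have := dist_triangle (β m • c) (β m • u) z
      rw [Metric.mem_closedBall]
      rw [dist_comm] at h2
      calc dist (β m • c) z ≤ dist (β m • c) (β m • u) + dist (β m • u) z :=
            dist_triangle _ _ _
        _ ≤ ε' + ρ / 2 := by linarith
        _ ≤ ρ := by linarith [hε'ρ]
    obtain ⟨p, hpK, φ, hφmono, hφtendsto⟩ := hKball.tendsto_subseq hmem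
    have hpC : p ∈ MulAction.orbit H c :=
      hqcl.mem_of_tendsto hφtendsto (Filter.Eventually.of_forall fun m =>
        MulAction.mem_orbit _ _)
    -- the orbit of z uniformly ε-shadows the orbit of p
    have hβuz : Filter.Tendsto (fun m => β m • u) Filter.atTop (nhds z) := by
      rw [Metric.tendsto_atTop]
      intro r hr
      obtain ⟨N, hN⟩ := exists_nat_one_div_lt (K := ℝ) hr
      refine ⟨N, fun m hm => ?_⟩
      have h1 : dist (β m • u) z < 1 / (m + 1 : ℝ) := by
        rw [hβu m]; exact lt_of_lt_of_le (hγs m) (min_le_left _ _)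
      have h2 : (1 : ℝ) / (m + 1) ≤ 1 / (N + 1) := by
        apply one_div_le_one_div_of_le (by positivity)
        exact_mod_cast by exact_mod_cast add_le_add_left (Nat.cast_le.2 hm) 1
      linarith
    have hshadow : ∀ g : H, dist (g • z) (g • p) ≤ ε := by
      intro g
      have t1 : Filter.Tendsto (fun m => g • (β (φ m) • u)) Filter.atTop (nhds (g • z)) :=
        ((hc g).tendsto z).comp (hβuz.comp hφmono.tendsto_atTop)
      have t2 : Filter.Tendsto (fun m => g • (β (φ m) • c)) Filter.atTop (nhds (g • p)) :=
        ((hc g).tendsto p).comp hφtendsto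
      have t3 : Filter.Tendsto
          (fun m => dist (g • (β (φ m) • u)) (g • (β (φ m) • c)))
          Filter.atTop (nhds (dist (g • z) (g • p))) := t1.dist t2
      refine le_of_tendsto t3 (Filter.Eventually.of_forall fun m => ?_)
      have h5 : dist ((g * β (φ m)) • u) ((g * β (φ m)) • c) < ε' := hU _ _ _ huU hqU
      calc dist (g • β (φ m) • u) (g • β (φ m) • c)
          = dist ((g * β (φ m)) • u) ((g * β (φ m)) • c) := by
            rw [mul_smul, mul_smul]
        _ ≤ ε := le_trans h5.le hε'ε
    exact ⟨c, p, hqcl, hpC, hshadow, hCdense⟩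
  -- there exists a point with closed orbit
  have hEx : ∃ c₀ : Y, IsClosed (MulAction.orbit H c₀) := by
    obtain ⟨q, hq, -⟩ := hE.exists_mem_open isOpen_univ ⟨x₀, trivial⟩
    simp only [Set.mem_iUnion, Set.mem_setOf_eq] at hq
    obtain ⟨c₀, hc₀, -⟩ := hq
    exact ⟨c₀, hc₀⟩
  obtain ⟨z, hzcl⟩ := hEx
  have hzdense : Dense (MulAction.orbit H z) := by
    rw [Metric.dense_iff]
    intro w r hr
    obtain ⟨c, p, hCcl, hpC, hshadow, hCdense⟩ := key z (r / 4) (by positivity)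
    obtain ⟨g, hg⟩ := hCdense w
    obtain ⟨h, hh⟩ := hpC
    refine ⟨(g * h⁻¹) • z, ?_, MulAction.mem_orbit _ _⟩
    have h1 : (g * h⁻¹) • p = g • c := by
      rw [← hh, smul_smul, inv_mul_cancel_right]
    have h2 : dist ((g * h⁻¹) • z) ((g * h⁻¹) • p) ≤ r / 4 := hshadow _
    rw [h1] at h2
    rw [Metric.mem_ball]
    calc dist ((g * h⁻¹) • z) w ≤ dist ((g * h⁻¹) • z) (g • c) + dist (g • c) w :=
          dist_triangle _ _ _
      _ < r / 4 + 2 * (r / 4) := by rw [dist_comm (g • c) w]; exact add_lt_add_of_le_of_lt h2 hg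
      _ < r := by linarith
  have horb : MulAction.orbit H z = Set.univ := by
    have := hzdense.closure_eq
    rw [hzcl.closure_eq] at this
    exact this
  have hx0 : x₀ ∈ MulAction.orbit H z := horb ▸ Set.mem_univ _
  have : MulAction.orbit H x₀ = MulAction.orbit H z := MulAction.orbit_eq_iff.2 hx0
  exact hx₀ncl (this ▸ hzcl)

/-- Let `J ⊆ ℕ`, let `(X_i, dist)` be metric spaces with metrics bounded by `1`, acted on
chaotically by homeomorphisms by groups `G_i`, and let `X = ∏_{i ∈ J} X_i` carry the
product metric `d`. If for some `n ∈ J` the space `(X_n, dist)` is a locally compact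
metric Baire space, then the direct product group `G = ∏_{i ∈ J} G_i`, acting canonically
on `X`, is chaotic on `X` and sensitive to initial conditions on `(X, d)`. -/
theorem product_chaotic_and_sensitive {X G : ℕ → Type*}
    [∀ i, MetricSpace (X i)] [∀ i, Group (G i)] [∀ i, MulAction (G i) (X i)]
    (J : Set ℕ)
    (hbdd : ∀ (i : J) (x y : X i), dist x y ≤ 1)
    (hcont : ∀ (i : J) (g : G i), Continuous fun x : X i => g • x)
    (d : (∀ i : J, X i) → (∀ i : J, X i) → ℝ)
    (hd : ∀ x y, d x y = ∑' i : J, (1 / 2 : ℝ) ^ (i : ℕ) * dist (x i) (y i))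
    (hchaos : ∀ i : J, Chaotic (G i) (X i))
    (n : J) (hLC : LocallyCompactSpace (X n)) (hBaire : BaireSpace (X n)) :
    Chaotic (∀ i : J, G i) (∀ i : J, X i) ∧ SensitiveOn (∀ i : J, G i) d := by
  -- the orbit of the product action is the product of the orbits
  have orbit_pi : ∀ x : ∀ i : J, X i, MulAction.orbit (∀ i : J, G i) x =
      Set.pi (Set.univ : Set J) (fun i => MulAction.orbit (G i) (x i)) := by
    intro x
    ext y
    constructor
    · rintro ⟨g, rfl⟩ i _
      exact ⟨g i, rfl⟩
    · intro hy
      choose g hg using fun i => hy i (Set.mem_univ i)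
      exact ⟨g, funext fun i => hg i⟩
  have summ : ∀ x y : ∀ i : J, X i,
      Summable (fun i : J => (1 / 2 : ℝ) ^ (i : ℕ) * dist (x i) (y i)) := by
    intro x y
    apply Summable.of_nonneg_of_le (fun i => by positivity)
      (fun (i : J) => ?_) ((summable_geometric_of_lt_one (by norm_num) (by norm_num :
        (1/2 : ℝ) < 1)).subtype J)
    calc (1 / 2 : ℝ) ^ (i : ℕ) * dist (x i) (y i) ≤ (1 / 2 : ℝ) ^ (i : ℕ) * 1 := by
          have := hbdd i (x i) (y i)
          have h2 : (0:ℝ) ≤ (1 / 2 : ℝ) ^ (i : ℕ) := by positivity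
          nlinarith
      _ = (1 / 2 : ℝ) ^ (i : ℕ) := mul_one _
  constructor
  · constructor
    · -- a dense non-closed orbit
      choose x hxdense hxncl using fun i : J => (hchaos i).1
      refine ⟨x, ?_, ?_⟩
      · rw [orbit_pi]
        exact dense_pi Set.univ (fun i _ => hxdense i)
      · intro hcl
        rw [orbit_pi] at hcl
        apply hxncl n
        apply isClosed_of_closure_subset
        intro a ha
        have h1 : Set.pi (Set.univ : Set J) (fun i => MulAction.orbit (G i) (x i)) =
            Set.pi (Set.univ : Set J) (fun i => closure (MulAction.orbit (G i) (x i))) := by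
          rw [← closure_pi_set]
          exact hcl.closure_eq.symm
        classical
        have hy : Function.update x n a ∈
            Set.pi (Set.univ : Set J) (fun i => closure (MulAction.orbit (G i) (x i))) := by
          intro i _
          by_cases hin : i = n
          · subst hin
            simpa using ha
          · rw [Function.update_of_ne hin]
            exact subset_closure (MulAction.mem_orbit_self _)
        rw [← h1] at hy
        have := hy n (Set.mem_univ n)
        simpa using this
    · -- closed orbits are dense
      refine Dense.mono ?_ (dense_pi Set.univ (fun i _ => (hchaos i).2))
      intro y hy
      have hclosed : ∀ i : J, IsClosed (MulAction.orbit (G i) (y i)) := by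
        intro i
        have := hy i (Set.mem_univ i)
        simp only [Set.mem_iUnion, Set.mem_setOf_eq] at this
        obtain ⟨c, hccl, hyc⟩ := this
        rw [MulAction.orbit_eq_iff.2 hyc]
        exact hccl
      simp only [Set.mem_iUnion, Set.mem_setOf_eq]
      refine ⟨y, ?_, MulAction.mem_orbit_self _⟩
      rw [orbit_pi]
      exact isClosed_set_pi (fun i _ => hclosed i)
  · -- sensitivity
    obtain ⟨δ, hδ, hsens⟩ := factor_sensitive (hcont n) (hchaos n) hLC
    refine ⟨(1 / 2 : ℝ) ^ (n : ℕ) * δ, by positivity, ?_⟩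
    intro U hU hUne
    have hproj : IsOpen (Function.eval n '' U) := isOpenMap_eval n U hU
    obtain ⟨g, a, b, haU, hbU, hab⟩ := hsens _ hproj (hUne.image _)
    obtain ⟨u, huU, hua⟩ := haU
    obtain ⟨v, hvU, hvb⟩ := hbU
    classical
    set gg : ∀ i : J, G i := Function.update (1 : ∀ i : J, G i) n g with hgg
    refine ⟨gg, ?_⟩
    have hgn : gg n = g := by rw [hgg]; simp
    have hsmul : ∀ w : ∀ i : J, X i, (gg • w) n = g • (w n) := by
      intro w
      rw [Pi.smul_apply', hgn]
    have hle : (1 / 2 : ℝ) ^ (n : ℕ) * δ ≤ d (gg • u) (gg • v) := by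
      rw [hd]
      have hterm : (1 / 2 : ℝ) ^ (n : ℕ) * dist ((gg • u) n) ((gg • v) n) ≤
          ∑' i : J, (1 / 2 : ℝ) ^ (i : ℕ) * dist ((gg • u) i) ((gg • v) i) :=
        Summable.le_tsum (summ _ _) n (fun j _ => by positivity)
      refine le_trans ?_ hterm
      rw [hsmul u, hsmul v]
      rw [show u n = a from hua, show v n = b from hvb]
      have h2 : (0:ℝ) ≤ (1 / 2 : ℝ) ^ (n : ℕ) := by positivity
      exact mul_le_mul_of_nonneg_left hab h2
    calc ENNReal.ofReal ((1 / 2 : ℝ) ^ (n : ℕ) * δ)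
        ≤ ENNReal.ofReal (d (gg • u) (gg • v)) := ENNReal.ofReal_le_ofReal hle
      _ ≤ ediamD d (gg • U) := by
          refine le_iSup_of_le ⟨gg • u, Set.smul_mem_smul_set huU⟩ ?_
          exact le_iSup_of_le ⟨gg • v, Set.smul_mem_smul_set hvU⟩ le_rfl
end

section
/- Let G be a countable group acting by homeomorphisms on a compact metrizable space X. If G is chaotic on X, then G is residually finite, and G is sensitive to initial conditions with respect to every metric inducing the topology of X. -/
open Pointwise

/-- A group is residually finite if every nontrivial element avoids some normal subgroup
of finite index. -/
def ResiduallyFinite (G : Type*) [Group G] : Prop :=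
  ∀ g : G, g ≠ 1 → ∃ N : Subgroup G, N.Normal ∧ N.index ≠ 0 ∧ g ∉ N

section Helpers
variable {G X : Type*} [Group G] [MulAction G X] [TopologicalSpace X]

private def smulHomeo (hcont : ∀ g : G, Continuous fun x : X => g • x) (g : G) : X ≃ₜ X where
  toFun := fun x => g • x
  invFun := fun x => g⁻¹ • x
  left_inv := inv_smul_smul g
  right_inv := smul_inv_smul g
  continuous_toFun := hcont g
  continuous_invFun := hcont g⁻¹

private lemma isOpen_smul_set' (hcont : ∀ g : G, Continuous fun x : X => g • x) (g : G)
    {U : Set X} (hU : IsOpen U) : IsOpen (g • U) := by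
  have : g • U = (smulHomeo hcont g) '' U := rfl
  rw [this, Homeomorph.isOpen_image]
  exact hU

private lemma isClosed_smul_set' (hcont : ∀ g : G, Continuous fun x : X => g • x) (g : G)
    {U : Set X} (hU : IsClosed U) : IsClosed (g • U) := by
  have : g • U = (smulHomeo hcont g) '' U := rfl
  rw [this, Homeomorph.isClosed_image]
  exact hU

omit [TopologicalSpace X] in
private lemma kernel_lemma (y : X) (hfin : (MulAction.orbit G y).Finite) :
    ∃ N : Subgroup G, N.Normal ∧ N.index ≠ 0 ∧
      ∀ g : G, (g ∈ N ↔ ∀ z ∈ MulAction.orbit G y, g • z = z) := by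
  haveI : Finite (MulAction.orbit G y) := hfin.to_subtype
  let φ := MulAction.toPermHom G (MulAction.orbit G y)
  refine ⟨φ.ker, MonoidHom.normal_ker φ, ?_, ?_⟩
  · rw [Subgroup.index_ker]
    haveI : Nonempty φ.range := ⟨1, 1, map_one φ⟩
    exact Nat.card_pos.ne'
  · intro g
    rw [MonoidHom.mem_ker]
    constructor
    · intro h z hz
      have h2 := congrArg (fun e : Equiv.Perm (MulAction.orbit G y) => e ⟨z, hz⟩) h
      have h3 : (g • (⟨z, hz⟩ : MulAction.orbit G y)) = ⟨z, hz⟩ := h2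
      exact congrArg Subtype.val h3
    · intro h
      ext w
      exact h w w.2

private lemma closed_orbit_finite [Countable G] [CompactSpace X] [T2Space X]
    (hcont : ∀ g : G, Continuous fun x : X => g • x)
    {y : X} (hcl : IsClosed (MulAction.orbit G y)) : (MulAction.orbit G y).Finite := by
  have hKc : IsCompact (MulAction.orbit G y) := hcl.isCompact
  haveI : CompactSpace (MulAction.orbit G y) := isCompact_iff_compactSpace.mp hKc
  have hcount : (MulAction.orbit G y).Countable := Set.countable_range fun g : G => g • y
  haveI : Countable (MulAction.orbit G y) := hcount.to_subtype
  haveI : Nonempty (MulAction.orbit G y) := ⟨⟨y, MulAction.mem_orbit_self y⟩⟩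
  obtain ⟨x, hx⟩ := nonempty_interior_of_iUnion_of_closed
    (f := fun x : MulAction.orbit G y => ({x} : Set (MulAction.orbit G y)))
    (fun x => isClosed_singleton) (by ext z; simp)
  have hxo : IsOpen ({x} : Set (MulAction.orbit G y)) := by
    have h1 : interior ({x} : Set (MulAction.orbit G y)) = {x} :=
      hx.subset_singleton_iff.mp interior_subset
    rw [← h1]; exact isOpen_interior
  have hall : ∀ z : MulAction.orbit G y, IsOpen ({z} : Set (MulAction.orbit G y)) := by
    intro z
    obtain ⟨V, hV, hVx⟩ := isOpen_induced_iff.mp hxo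
    have hzx : (z : X) ∈ MulAction.orbit G (x : X) := by
      have h2 : MulAction.orbit G (x : X) = MulAction.orbit G y :=
        MulAction.orbit_eq_iff.mpr x.2
      rw [h2]; exact z.2
    obtain ⟨g, hg⟩ := hzx
    have hg' : g • (x : X) = (z : X) := hg
    refine isOpen_induced_iff.mpr ⟨g • V, isOpen_smul_set' hcont g hV, ?_⟩
    ext w
    simp only [Set.mem_preimage, Set.mem_singleton_iff]
    rw [Set.mem_smul_set_iff_inv_smul_mem]
    have hw : g⁻¹ • (w : X) ∈ MulAction.orbit G y := by
      have := Set.smul_mem_smul_set (a := g⁻¹) w.2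
      rwa [MulAction.smul_orbit] at this
    constructor
    · intro h
      have h3 : (⟨g⁻¹ • (w : X), hw⟩ : MulAction.orbit G y) ∈ Subtype.val ⁻¹' V := h
      rw [hVx, Set.mem_singleton_iff] at h3
      have h4 : g⁻¹ • (w : X) = (x : X) := congrArg Subtype.val h3
      have h5 : (w : X) = g • (x : X) := by rw [← h4, smul_inv_smul]
      exact Subtype.ext (h5.trans hg')
    · intro h
      have hwz : g⁻¹ • (w : X) = (x : X) := by
        rw [h, ← hg', inv_smul_smul]
      have h6 : (⟨g⁻¹ • (w : X), hw⟩ : MulAction.orbit G y) = x := Subtype.ext hwz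
      show (⟨g⁻¹ • (w : X), hw⟩ : MulAction.orbit G y) ∈ Subtype.val ⁻¹' V
      rw [hVx]; exact h6
  haveI : DiscreteTopology (MulAction.orbit G y) := discreteTopology_iff_isOpen_singleton.mpr hall
  exact hKc.finite (isDiscrete_iff_discreteTopology.mpr inferInstance)

private lemma exists_closed_orbit_pt
    (hd : Dense (⋃ x ∈ {y : X | IsClosed (MulAction.orbit G y)}, MulAction.orbit G x))
    {U : Set X} (hU : IsOpen U) (hne : U.Nonempty) :
    ∃ q ∈ U, IsClosed (MulAction.orbit G q) := by
  obtain ⟨z, hz, hzU⟩ := hd.exists_mem_open hU hne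
  rw [Set.mem_iUnion₂] at hz
  obtain ⟨x, hx, hzx⟩ := hz
  refine ⟨z, hzU, ?_⟩
  rw [MulAction.orbit_eq_iff.mpr hzx]
  exact hx

end Helpers

/-- If a countable group `G` acting faithfully by homeomorphisms on a compact metrizable
space `X` is chaotic, then `G` is residually finite and sensitive to initial conditions
with respect to every metric inducing the topology of `X`. -/
theorem residuallyFinite_and_sensitive_of_chaotic {G X : Type*} [Group G] [Countable G]
    [MulAction G X] [FaithfulSMul G X] [TopologicalSpace X] [CompactSpace X]
    [TopologicalSpace.MetrizableSpace X]
    (hcont : ∀ g : G, Continuous fun x : X => g • x)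
    (hchaos : Chaotic G X) :
    ResiduallyFinite G ∧
    ∀ ρ : X → X → ℝ,
      (∀ x y, ρ x y = ρ y x) →
      (∀ x y, ρ x y = 0 ↔ x = y) →
      (∀ x y z, ρ x z ≤ ρ x y + ρ y z) →
      (∀ s : Set X, IsOpen s ↔ ∀ x ∈ s, ∃ ε > 0, ∀ y, ρ x y < ε → y ∈ s) →
      SensitiveOn G ρ := by
  obtain ⟨⟨x₀, hx₀d, hx₀nc⟩, hcd⟩ := hchaos
  constructor
  · -- residual finiteness
    intro g hg
    have hgx : ∃ x : X, g • x ≠ x := by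
      by_contra h
      push_neg at h
      exact hg (FaithfulSMul.eq_of_smul_eq_smul (fun a => by rw [h a, one_smul]))
    obtain ⟨x, hx⟩ := hgx
    have hVcl : IsClosed {x : X | g • x = x} := isClosed_eq (hcont g) continuous_id
    have hVopen : IsOpen {x : X | g • x = x}ᶜ := hVcl.isOpen_compl
    have hVne : ({x : X | g • x = x}ᶜ).Nonempty := ⟨x, hx⟩
    obtain ⟨q, hqU, hqcl⟩ := exists_closed_orbit_pt hcd hVopen hVne
    obtain ⟨N, hN1, hN2, hN3⟩ := kernel_lemma q (closed_orbit_finite hcont hqcl)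
    refine ⟨N, hN1, hN2, fun hgN => ?_⟩
    exact hqU ((hN3 g).mp hgN q (MulAction.mem_orbit_self q))
  · -- sensitivity
    intro ρ hsymm heq htri htop
    -- basic facts about ρ
    have hnneg : ∀ x y : X, 0 ≤ ρ x y := by
      intro x y
      nlinarith [htri x y x, (heq x x).mpr rfl, hsymm x y]
    have hball : ∀ (x : X) (ε : ℝ), IsOpen {z : X | ρ x z < ε} := by
      intro x ε
      rw [htop]
      intro w hw
      refine ⟨ε - ρ x w, by simpa using hw, fun z hz => ?_⟩
      have := htri x w z
      simp only [Set.mem_setOf_eq] at *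
      linarith
    -- two distinct closed orbits
    haveI : Nonempty X := ⟨x₀⟩
    obtain ⟨y₁, -, hy₁cl⟩ := exists_closed_orbit_pt hcd isOpen_univ ⟨x₀, trivial⟩
    have hy₁fin := closed_orbit_finite hcont hy₁cl
    have hy₂ : ∃ y₂ : X, IsClosed (MulAction.orbit G y₂) ∧
        MulAction.orbit G y₂ ≠ MulAction.orbit G y₁ := by
      by_contra h
      push_neg at h
      have hsub : (⋃ x ∈ {y : X | IsClosed (MulAction.orbit G y)}, MulAction.orbit G x)
          ⊆ MulAction.orbit G y₁ := by
        intro z hz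
        rw [Set.mem_iUnion₂] at hz
        obtain ⟨x, hx, hzx⟩ := hz
        rw [← h x hx]; exact hzx
      have huniv : (Set.univ : Set X) ⊆ MulAction.orbit G y₁ := by
        have h1 : closure (⋃ x ∈ {y : X | IsClosed (MulAction.orbit G y)},
            MulAction.orbit G x) = Set.univ := hcd.closure_eq
        rw [← h1]
        exact closure_minimal hsub hy₁cl
      have : (MulAction.orbit G x₀).Finite :=
        hy₁fin.subset (fun z hz => huniv (Set.mem_univ z))
      exact hx₀nc this.isClosed
    obtain ⟨y₂, hy₂cl, hy₂ne⟩ := hy₂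
    have hy₂fin := closed_orbit_finite hcont hy₂cl
    -- disjointness
    have hdisj : ∀ a ∈ MulAction.orbit G y₁, ∀ b ∈ MulAction.orbit G y₂, a ≠ b := by
      intro a ha b hb hab
      apply hy₂ne
      rw [← MulAction.orbit_eq_iff.mpr hb, ← hab, MulAction.orbit_eq_iff.mpr ha]
    -- minimum distance
    set F₁ := hy₁fin.toFinset with hF₁
    set F₂ := hy₂fin.toFinset with hF₂
    have hne12 : (F₁ ×ˢ F₂).Nonempty := by
      refine Finset.Nonempty.product ?_ ?_ <;>
        simp [hF₁, hF₂, Set.Finite.toFinset, MulAction.mem_orbit_self] <;>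
        exact ⟨_, MulAction.mem_orbit_self _⟩
    set δ₀ := (F₁ ×ˢ F₂).inf' hne12 (fun p => ρ p.1 p.2) with hδ₀
    have hδ₀pos : 0 < δ₀ := by
      rw [hδ₀, Finset.lt_inf'_iff]
      rintro ⟨a, b⟩ hab
      rw [Finset.mem_product] at hab
      have ha : a ∈ MulAction.orbit G y₁ := by
        rw [← Set.Finite.mem_toFinset hy₁fin]; exact hab.1
      have hb : b ∈ MulAction.orbit G y₂ := by
        rw [← Set.Finite.mem_toFinset hy₂fin]; exact hab.2
      have : ρ a b ≠ 0 := fun h0 => hdisj a ha b hb ((heq a b).mp h0)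
      cases lt_or_eq_of_le (hnneg a b) with
      | inl h => exact h
      | inr h => exact absurd h.symm this
    have hδ₀le : ∀ a ∈ MulAction.orbit G y₁, ∀ b ∈ MulAction.orbit G y₂, δ₀ ≤ ρ a b := by
      intro a ha b hb
      exact Finset.inf'_le (b := ((a, b) : X × X)) (fun p : X × X => ρ p.1 p.2)
        (Finset.mem_product.mpr
        ⟨(Set.Finite.mem_toFinset hy₁fin).mpr ha, (Set.Finite.mem_toFinset hy₂fin).mpr hb⟩)
    refine ⟨δ₀ / 8, by linarith, ?_⟩
    intro U hU hUne
    -- point with closed (finite) orbit in U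
    obtain ⟨q, hqU, hqcl⟩ := exists_closed_orbit_pt hcd hU hUne
    have hqfin := closed_orbit_finite hcont hqcl
    -- point with dense orbit in U
    obtain ⟨y', hy'o, hy'U⟩ := hx₀d.exists_mem_open hU hUne
    have hy'd : Dense (MulAction.orbit G y') := by
      rw [MulAction.orbit_eq_iff.mpr hy'o]; exact hx₀d
    -- the far orbit O = orbit of w
    have hside : ∃ w : X, (MulAction.orbit G w = MulAction.orbit G y₁ ∨
        MulAction.orbit G w = MulAction.orbit G y₂) ∧
        (∀ o ∈ MulAction.orbit G w, δ₀ / 2 ≤ ρ q o) := by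
      by_cases h : ∀ o ∈ MulAction.orbit G y₁, δ₀ / 2 ≤ ρ q o
      · exact ⟨y₁, Or.inl rfl, h⟩
      · push_neg at h
        obtain ⟨o₁, ho₁, ho₁lt⟩ := h
        refine ⟨y₂, Or.inr rfl, fun o ho => ?_⟩
        by_contra hlt
        push_neg at hlt
        have h1 : δ₀ ≤ ρ o₁ o := hδ₀le o₁ ho₁ o ho
        have h2 : ρ o₁ o ≤ ρ o₁ q + ρ q o := htri o₁ q o
        have h3 : ρ o₁ q = ρ q o₁ := hsymm o₁ q
        linarith
    obtain ⟨w, hwOr, hwfar⟩ := hside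
    -- kernel of the action on orbit q
    obtain ⟨N, hN1, hN2, hN3⟩ := kernel_lemma q hqfin
    haveI : N.FiniteIndex := ⟨hN2⟩
    -- coset covering
    set S : Set X := Set.range (fun n : N => (n : G) • y') with hS
    have hcover : (Set.univ : Set X) ⊆ ⋃ c : G ⧸ N, (Quotient.out c) • closure S := by
      have horb : MulAction.orbit G y' ⊆ ⋃ c : G ⧸ N, (Quotient.out c) • closure S := by
        rintro - ⟨g, rfl⟩
        show g • y' ∈ ⋃ c : G ⧸ N, (Quotient.out c) • closure S
        have : ∃ h : N, (QuotientGroup.mk g : G ⧸ N).out = g * h :=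
          QuotientGroup.mk_out_eq_mul N g
        obtain ⟨n, hn⟩ := this
        refine Set.mem_iUnion.mpr ⟨QuotientGroup.mk g, ?_⟩
        have hmem : (n : G)⁻¹ • y' ∈ closure S := by
          apply subset_closure
          exact ⟨n⁻¹, rfl⟩
        have : (QuotientGroup.mk g : G ⧸ N).out • ((n : G)⁻¹ • y') = g • y' := by
          rw [hn, mul_smul, smul_inv_smul]
        rw [← this]
        exact Set.smul_mem_smul_set hmem
      have hcl : IsClosed (⋃ c : G ⧸ N, (Quotient.out c) • closure S) := by
        apply isClosed_iUnion_of_finite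
        intro c
        exact isClosed_smul_set' hcont _ isClosed_closure
      calc (Set.univ : Set X) = closure (MulAction.orbit G y') := hy'd.closure_eq.symm
        _ ⊆ ⋃ c : G ⧸ N, (Quotient.out c) • closure S := closure_minimal horb hcl
    -- find o' in orbit w ∩ closure S
    have hwne : w ∈ MulAction.orbit G w := MulAction.mem_orbit_self w
    obtain ⟨c, hc⟩ := Set.mem_iUnion.mp (hcover (Set.mem_univ w))
    set o' := (Quotient.out c)⁻¹ • w with ho'
    have ho'S : o' ∈ closure S := by
      rw [ho']
      exact (Set.mem_smul_set_iff_inv_smul_mem).mp hc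
    have ho'O : o' ∈ MulAction.orbit G w := ⟨(Quotient.out c)⁻¹, rfl⟩
    -- find n with ρ o' (n • y') < δ₀/8
    have hom : o' ∈ {z : X | ρ o' z < δ₀ / 8} := by simp [(heq o' o').mpr rfl]; linarith
    obtain ⟨z, hz1, hz2⟩ := (_root_.mem_closure_iff.mp ho'S) _ (hball o' (δ₀/8)) hom
    obtain ⟨n, hn⟩ := hz2
    -- conclude
    refine ⟨(n : G), ?_⟩
    have hnq : (n : G) • q = q := (hN3 n).mp n.2 q (MulAction.mem_orbit_self q)
    have hqfar : δ₀ / 2 ≤ ρ q o' := hwfar o' ho'O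
    have hn' : (n : G) • y' = z := hn
    have hny : ρ o' ((n : G) • y') < δ₀ / 8 := by rw [hn']; exact hz1
    have hmain : δ₀ / 8 ≤ ρ ((n : G) • y') q := by
      have h1 : ρ q o' ≤ ρ q ((n : G) • y') + ρ ((n : G) • y') o' := htri _ _ _
      have h2 : ρ ((n : G) • y') o' = ρ o' ((n : G) • y') := hsymm _ _
      have h3 : ρ ((n : G) • y') q = ρ q ((n : G) • y') := hsymm _ _
      linarith
    have hm1 : (n : G) • y' ∈ (n : G) • U := Set.smul_mem_smul_set hy'U
    have hm2 : q ∈ (n : G) • U := by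
      rw [← hnq]; exact Set.smul_mem_smul_set hqU
    calc ENNReal.ofReal (δ₀ / 8) ≤ ENNReal.ofReal (ρ ((n : G) • y') q) :=
          ENNReal.ofReal_le_ofReal hmain
      _ ≤ ediamD ρ ((n : G) • U) := by
          exact le_iSup₂_of_le (⟨(n : G) • y', hm1⟩ : ((n : G) • U : Set X))
            (⟨q, hm2⟩ : ((n : G) • U : Set X)) le_rfl
end

section
/- For each i ∈ ℕ, let G_i be a countable group acting by homeomorphisms on a compact metrizable space X_i, and assume each G_i is chaotic on X_i. Let G = ∏_{i∈ℕ} G_i act canonically on the Tychonoff product X = ∏_{i∈ℕ} X_i. Then (1) G is chaotic on X; (2) there exists a dense orbit of G in X which has the cardinality of the continuum; and (3) if in addition every G_i has a fixed point in X_i, then the union of the finite orbits of G is dense in X and G has a fixed point in X. -/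
open MulAction Set Cardinal

section Aux

variable {G X : Type*} [Group G] [MulAction G X] [TopologicalSpace X]

/-- A closed orbit of a countable group acting by homeomorphisms on a compact
metrizable space is finite. -/
lemma orbit_finite_of_isClosed [CompactSpace X] [TopologicalSpace.MetrizableSpace X]
    [Countable G] (hcont : ∀ g : G, Continuous fun x : X => g • x) (x : X)
    (h : IsClosed (MulAction.orbit G x)) : (MulAction.orbit G x).Finite := by
  letI : MetricSpace X := TopologicalSpace.metrizableSpaceMetric X
  set O := MulAction.orbit G x with hO
  have hcount : O.Countable := Set.countable_range fun g : G => g • x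
  -- there exists an isolated point of O
  have hiso : ∃ a ∈ O, ∃ U, IsOpen U ∧ a ∈ U ∧ U ∩ O ⊆ {a} := by
    by_contra hcon
    push_neg at hcon
    have hperf : Perfect O := by
      refine ⟨h, fun a ha => ?_⟩
      rw [accPt_iff_nhds]
      intro U hU
      obtain ⟨V, hVU, hVopen, haV⟩ := mem_nhds_iff.mp hU
      obtain ⟨y, hy1, hy2⟩ := Set.not_subset.mp (hcon a ha V hVopen haV)
      exact ⟨y, ⟨hVU hy1.1, hy1.2⟩, hy2⟩
    obtain ⟨f, hfr, -, hfinj⟩ := hperf.exists_nat_bool_injection ⟨x, mem_orbit_self x⟩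
    have hcnt : Countable (ℕ → Bool) := by
      have := (hcount.mono hfr).to_subtype
      exact Countable.of_equiv _ (Equiv.ofInjective f hfinj).symm
    have h2 : (2 : Cardinal) ^ aleph0 = #(ℕ → Bool) := by
      rw [← Cardinal.mk_bool, ← Cardinal.mk_nat, Cardinal.power_def]
    have h1 : (2 : Cardinal) ^ aleph0 ≤ aleph0 := by
      rw [h2]; exact Cardinal.mk_le_aleph0_iff.mpr hcnt
    exact absurd h1 (not_le.mpr (Cardinal.cantor aleph0))
  obtain ⟨a, ha, U, hUopen, haU, hUsub⟩ := hiso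
  -- every point of O is isolated
  have key : ∀ b : O, ∃ V, IsOpen V ∧ (b : X) ∈ V ∧ V ∩ O ⊆ {(b : X)} := by
    rintro ⟨b, hb⟩
    obtain ⟨g, hg⟩ : ∃ g : G, g • a = b := by
      have hab : b ∈ MulAction.orbit G a := by
        rw [MulAction.orbit_eq_iff.mpr ha]; exact hb
      exact hab
    refine ⟨(fun z => g⁻¹ • z) ⁻¹' U, (hcont g⁻¹).isOpen_preimage U hUopen, ?_, ?_⟩
    · show g⁻¹ • b ∈ U
      rw [← hg, inv_smul_smul]; exact haU
    · rintro z ⟨hz1, hz2⟩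
      have hzO : g⁻¹ • z ∈ O := by
        obtain ⟨g', rfl⟩ := hz2
        exact ⟨g⁻¹ * g', mul_smul g⁻¹ g' x⟩
      have : g⁻¹ • z = a := hUsub ⟨hz1, hzO⟩
      have : g⁻¹ • z = g⁻¹ • b := by rw [this, ← hg, inv_smul_smul]
      simpa using smul_left_cancel g⁻¹ this
  choose V hVopen hbV hVsub using key
  have hcomp : IsCompact O := h.isCompact
  obtain ⟨t, ht⟩ := hcomp.elim_finite_subcover V hVopen
    (fun z hz => mem_iUnion.mpr ⟨⟨z, hz⟩, hbV ⟨z, hz⟩⟩)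
  refine Set.Finite.subset (t.finite_toSet.image Subtype.val) ?_
  intro z hz
  obtain ⟨b, hbmem⟩ := mem_iUnion.mp (ht hz)
  simp only [mem_iUnion, exists_prop] at hbmem
  obtain ⟨hbt, hzb⟩ := hbmem
  have : z = (b : X) := hVsub b ⟨hzb, hz⟩
  exact ⟨b, hbt, this.symm⟩

end Aux

lemma orbit_pi {X G : ℕ → Type*} [∀ i, Group (G i)] [∀ i, MulAction (G i) (X i)]
    (x : ∀ i, X i) :
    MulAction.orbit (∀ i, G i) x = Set.pi Set.univ (fun i => MulAction.orbit (G i) (x i)) := by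
  ext y
  constructor
  · rintro ⟨g, rfl⟩ i -
    exact ⟨g i, rfl⟩
  · intro hy
    choose g hg using fun i => hy i (mem_univ i)
    exact ⟨g, funext fun i => hg i⟩

lemma closedOrbit_dense {G X : Type*} [Group G] [MulAction G X] [TopologicalSpace X]
    (h : Dense (⋃ x ∈ {y : X | IsClosed (MulAction.orbit G y)}, MulAction.orbit G x)) :
    Dense {y : X | IsClosed (MulAction.orbit G y)} := by
  refine h.mono ?_
  rintro z hz
  simp only [mem_iUnion, exists_prop] at hz
  obtain ⟨x, hx, hzx⟩ := hz
  have : MulAction.orbit G z = MulAction.orbit G x := MulAction.orbit_eq_iff.mpr hzx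
  exact mem_setOf.mpr (this ▸ hx)

lemma fixed_orbit_eq {G X : Type*} [Group G] [MulAction G X] {p : X}
    (hp : ∀ g : G, g • p = p) : MulAction.orbit G p = {p} := by
  apply subset_antisymm
  · rintro _ ⟨g, rfl⟩
    exact hp g
  · rintro _ rfl
    exact MulAction.mem_orbit_self _


/-- For each `i ∈ ℕ`, let `G_i` be a countable group acting chaotically by homeomorphisms
on a compact metrizable space `X_i`, and let `G = ∏ G_i` act canonically on the Tychonoff
product `X = ∏ X_i`. Then `G` is chaotic on `X`; there is a dense orbit of `G` of continuum
cardinality; and if every `G_i` has a fixed point, then the union of the finite orbits of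
`G` is dense in `X` and `G` has a fixed point. -/
theorem countableProduct_chaotic {X G : ℕ → Type*}
    [∀ i, TopologicalSpace (X i)] [∀ i, CompactSpace (X i)]
    [∀ i, TopologicalSpace.MetrizableSpace (X i)]
    [∀ i, Group (G i)] [∀ i, Countable (G i)] [∀ i, MulAction (G i) (X i)]
    (hcont : ∀ (i : ℕ) (g : G i), Continuous fun x : X i => g • x)
    (hchaos : ∀ i, Chaotic (G i) (X i)) :
    Chaotic (∀ i, G i) (∀ i, X i) ∧
    (∃ x : ∀ i, X i, Dense (MulAction.orbit (∀ i, G i) x) ∧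
      Cardinal.mk (MulAction.orbit (∀ i, G i) x) = Cardinal.continuum) ∧
    ((∀ i, ∃ p : X i, ∀ g : G i, g • p = p) →
      Dense {x : ∀ i, X i | (MulAction.orbit (∀ i, G i) x).Finite} ∧
      ∃ p : ∀ i, X i, ∀ g : ∀ i, G i, g • p = p) := by

  choose x hxdense hxncl using fun i => (hchaos i).1
  have hC : ∀ i, Dense {y : X i | IsClosed (MulAction.orbit (G i) y)} :=
    fun i => closedOrbit_dense (hchaos i).2
  -- the orbit of x in the product
  have horb : MulAction.orbit (∀ i, G i) x
      = Set.pi Set.univ (fun i => MulAction.orbit (G i) (x i)) := orbit_pi x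
  have hdense : Dense (MulAction.orbit (∀ i, G i) x) := by
    rw [horb]; exact dense_pi Set.univ fun i _ => hxdense i
  have hncl : ¬ IsClosed (MulAction.orbit (∀ i, G i) x) := by
    intro hcl
    have huniv : MulAction.orbit (∀ i, G i) x = Set.univ := hcl.closure_eq ▸ hdense.closure_eq
    apply hxncl 0
    have : MulAction.orbit (G 0) (x 0) = Set.univ := by
      rw [Set.eq_univ_iff_forall]
      intro y0
      have hmem : Function.update x 0 y0 ∈ Set.pi univ (fun i => MulAction.orbit (G i) (x i)) := by
        rw [← horb, huniv]; trivial
      have := hmem 0 (mem_univ 0)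
      simpa using this
    rw [this]; exact isClosed_univ
  refine ⟨⟨⟨x, hdense, hncl⟩, ?_⟩, ⟨x, hdense, ?_⟩, ?_⟩
  · -- union of closed orbits is dense
    have hdC : Dense (Set.pi univ fun i => {y : X i | IsClosed (MulAction.orbit (G i) y)}) :=
      dense_pi Set.univ fun i _ => hC i
    refine hdC.mono ?_
    intro y hy
    have hycl : IsClosed (MulAction.orbit (∀ i, G i) y) := by
      rw [orbit_pi y]
      exact isClosed_set_pi fun i _ => hy i (mem_univ i)
    exact mem_biUnion hycl (MulAction.mem_orbit_self y)
  · -- cardinality continuum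
    have hcnt : ∀ i, (MulAction.orbit (G i) (x i)).Countable :=
      fun i => Set.countable_range fun g : G i => g • x i
    have hinf : ∀ i, (MulAction.orbit (G i) (x i)).Infinite := by
      intro i
      letI : MetricSpace (X i) := TopologicalSpace.metrizableSpaceMetric (X i)
      intro hfin
      exact hxncl i hfin.isClosed
    have hmk : ∀ i, #(MulAction.orbit (G i) (x i)) = ℵ₀ := by
      intro i
      haveI := (hcnt i).to_subtype
      haveI := (hinf i).to_subtype
      exact Cardinal.mk_eq_aleph0 _
    rw [horb]
    have e : ↥(Set.pi univ fun i => MulAction.orbit (G i) (x i))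
        ≃ ∀ i, ↥(MulAction.orbit (G i) (x i)) :=
      { toFun := fun f i => ⟨f.1 i, f.2 i (mem_univ i)⟩
        invFun := fun f => ⟨fun i => (f i).1, fun i _ => (f i).2⟩
        left_inv := fun f => rfl
        right_inv := fun f => rfl }
    rw [Cardinal.mk_congr e, Cardinal.mk_pi]
    simp only [hmk]
    rw [Cardinal.prod_const]
    simp [Cardinal.aleph0_power_aleph0]
  · -- fixed points part
    intro hfix
    choose p hp using hfix
    have hFdense : ∀ i, Dense {y : X i | (MulAction.orbit (G i) y).Finite} := by
      intro i
      exact (hC i).mono fun y hy => orbit_finite_of_isClosed (hcont i) y hy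
    constructor
    · refine (isTopologicalBasis_pi
        (fun i : ℕ => TopologicalSpace.isTopologicalBasis_opens)).dense_iff.mpr ?_
      rintro o ⟨U, Fs, hU, rfl⟩ ⟨z, hz⟩
      have hsel : ∀ i ∈ Fs, ∃ y, y ∈ {y : X i | (MulAction.orbit (G i) y).Finite} ∧ y ∈ U i := by
        intro i hi
        exact (hFdense i).exists_mem_open (hU i hi) ⟨z i, hz i hi⟩
      choose y hy1 hy2 using hsel
      classical
      refine ⟨fun i => if h : i ∈ Fs then y i h else p i, ?_, ?_⟩
      · intro i hi
        have hi' : i ∈ Fs := hi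
        simp only [dif_pos hi']
        exact hy2 i hi' 
      · show (MulAction.orbit (∀ i, G i) fun i => if h : i ∈ Fs then y i h else p i).Finite
        rw [orbit_pi]
        set w : ∀ i, X i := fun i => if h : i ∈ Fs then y i h else p i with hw
        have hsing : ∀ i ∉ Fs, MulAction.orbit (G i) (w i) = {p i} := by
          intro i hi
          have hwi : w i = p i := by rw [hw]; simp only [dif_neg hi]
          rw [hwi]
          exact fixed_orbit_eq (hp i)
        have hfinall : ∀ i : Fs, (MulAction.orbit (G (i : ℕ)) (w (i : ℕ))).Finite := by
          rintro ⟨i, hi⟩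
          have hwi : w i = y i hi := by rw [hw]; simp only [dif_pos hi]
          rw [hwi]
          exact hy1 i hi
        apply Set.Finite.of_finite_image (f := fun v => fun i : Fs => v (i : ℕ))
        · refine Set.Finite.subset (Set.Finite.pi hfinall) ?_
          rintro _ ⟨v, hv, rfl⟩ i _
          exact hv (i : ℕ) (Set.mem_univ _)
        · intro v hv u hu hvu
          funext i
          by_cases hi : i ∈ Fs
          · exact congrFun hvu ⟨i, hi⟩
          · have h1 : v i = p i := by
              simpa [hsing i hi, dif_neg hi, fixed_orbit_eq (hp i)] using hv i (Set.mem_univ i)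
            have h2 : u i = p i := by
              simpa [hsing i hi, dif_neg hi, fixed_orbit_eq (hp i)] using hu i (Set.mem_univ i)
            rw [h1, h2]
    · exact ⟨p, fun g => funext fun i => hp i (g i)⟩
end
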